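/- arXiv:1202.4399 — 6 statements merged into one kernel-verified Lean document; each statement's English description precedes it below -/
import Mathlib

section
/- Every (ℵ0,ℵ1)-graph X with bipartition (A,B) has a subgraph X' induced by sets A' ⊆ A and B' ⊆ B such that X' is an (ℵ0,ℵ1)-graph with bipartition (A',B') and, in addition, every vertex of A' has uncountable degree in X'. -/
universe u v

/-- The tree order of a rooted tree `T` with root `r`:
`x ≤ y` iff `x` lies on every (equivalently, the unique) path in `T` from `r` to `y`. -/
def treeLE {V : Type u} (T : SimpleGraph V) (r : V) (x y : V) : Prop :=
  ∀ p : T.Walk r y, p.IsPath → x ∈ p.support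

/-- `T` is a normal spanning tree of `G` with root `r`: a spanning tree of `G` such that the
endvertices of every edge of `G` are comparable in the tree order of `T`. -/
def IsNormalSpanningTree {V : Type u} (G T : SimpleGraph V) (r : V) : Prop :=
  T.IsTree ∧ T ≤ G ∧ ∀ ⦃x y : V⦄, G.Adj x y → (treeLE T r x y ∨ treeLE T r y x)

/-- A fat `TK_ℵ0` in a simple graph `G`: a countably infinite family of branch vertices
together with, for every pair of branch vertices, a family of `ℵ1` paths of `G` between them,
all internally disjoint from each other and from the paths joining other pairs, with branch
vertices occurring only as endpoints. -/
structure FatTKAleph0 {V : Type u} (G : SimpleGraph V) where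
  branch : ℕ → V
  branch_inj : Function.Injective branch
  Idx : Type
  idx_card : Cardinal.mk Idx = Cardinal.aleph 1
  path : ∀ i j : ℕ, i < j → Idx → G.Walk (branch i) (branch j)
  isPath : ∀ (i j : ℕ) (h : i < j) (α : Idx), (path i j h α).IsPath
  branch_not_internal : ∀ (i j : ℕ) (h : i < j) (α : Idx) (k : ℕ),
    branch k ∈ (path i j h α).support → k = i ∨ k = j
  internally_disjoint : ∀ (i j : ℕ) (h : i < j) (α : Idx)
    (i' j' : ℕ) (h' : i' < j') (α' : Idx),
    (i, j, α) ≠ (i', j', α') → ∀ w : V, w ∈ (path i j h α).support →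
      w ∈ (path i' j' h' α').support →
      (w = branch i ∨ w = branch j) ∧ (w = branch i' ∨ w = branch j')
  path_ne : ∀ (i j : ℕ) (h : i < j) (α α' : Idx), α ≠ α' →
    path i j h α ≠ path i j h α'

/-- `G` contains a fat `TK_ℵ0` as a subgraph. -/
def HasFatTKAleph0 {V : Type u} (G : SimpleGraph V) : Prop :=
  Nonempty (FatTKAleph0 G)

/-- `G` contains a `TK_ℵ0`, a subdivision of the countably infinite complete graph,
as a subgraph. -/
def HasTKAleph0 {V : Type u} (G : SimpleGraph V) : Prop :=
  ∃ (b : ℕ → V) (P : ∀ i j : ℕ, i < j → G.Walk (b i) (b j)),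
    Function.Injective b ∧
    (∀ (i j : ℕ) (h : i < j), (P i j h).IsPath) ∧
    (∀ (i j : ℕ) (h : i < j) (k : ℕ), b k ∈ (P i j h).support → k = i ∨ k = j) ∧
    (∀ (i j : ℕ) (h : i < j) (i' j' : ℕ) (h' : i' < j'), (i, j) ≠ (i', j') →
      ∀ w : V, w ∈ (P i j h).support → w ∈ (P i' j' h').support →
        (w = b i ∨ w = b j) ∧ (w = b i' ∨ w = b j'))

/-- `X` is an `(ℵ0, ℵ1)`-graph with bipartition `(A, B)`: a bipartite graph with vertex
classes `A` of size `ℵ0` and `B` of size `ℵ1` in which every vertex of `B` has infinite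
degree. -/
def IsAleph0Aleph1Graph {V : Type u} (X : SimpleGraph V) (A B : Set V) : Prop :=
  Disjoint A B ∧ A ∪ B = Set.univ ∧
  Cardinal.mk A = Cardinal.aleph0 ∧ Cardinal.mk B = Cardinal.aleph 1 ∧
  (∀ ⦃x y : V⦄, X.Adj x y → (x ∈ A ∧ y ∈ B) ∨ (x ∈ B ∧ y ∈ A)) ∧
  (∀ b ∈ B, (X.neighborSet b).Infinite)

/-- `(T, ≤)` is an Aronszajn tree: it has a least element, all down-closures are
well-ordered, `T` is uncountable, and all chains and all levels of `T` are countable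
(points are on the same level iff their strict down-closures are order-isomorphic). -/
def IsAronszajnTree (T : Type u) [PartialOrder T] : Prop :=
  (∃ r : T, ∀ t : T, r ≤ t) ∧
  (∀ t : T, IsChain (· ≤ ·) (Set.Iic t)) ∧
  (∀ t : T, (Set.Iic t).WellFoundedOn (· < ·)) ∧
  ¬ (Set.univ : Set T).Countable ∧
  (∀ C : Set T, IsChain (· ≤ ·) C → C.Countable) ∧
  (∀ t : T, {s : T | Nonempty (↥(Set.Iio s) ≃o ↥(Set.Iio t))}.Countable)

/-- `X` is an Aronszajn-tree graph with respect to the partial order on its vertex type: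
the order is an Aronszajn tree, the endvertices of every edge are comparable, and every
vertex is joined cofinally to the vertices below it. -/
def IsATGraph {V : Type u} [PartialOrder V] (X : SimpleGraph V) : Prop :=
  IsAronszajnTree V ∧
  (∀ ⦃x y : V⦄, X.Adj x y → x ≤ y ∨ y ≤ x) ∧
  (∀ ⦃x y : V⦄, x < y → ∃ x' : V, X.Adj y x' ∧ x ≤ x' ∧ x' < y)

/-- `H` is an `IX` (an inflated copy of `X`): `V(H)` is partitioned into branch sets
`Vx x`, each inducing a connected subgraph of `H`, such that distinct `x, y` are adjacent
in `X` iff `H` has an edge between `Vx x` and `Vx y`. -/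
def IsIX {W : Type v} {V : Type u} (H : SimpleGraph W) (X : SimpleGraph V) : Prop :=
  ∃ Vx : V → Set W,
    (∀ w : W, ∃! x : V, w ∈ Vx x) ∧
    (∀ x : V, (H.induce (Vx x)).Connected) ∧
    (∀ x y : V, x ≠ y → (X.Adj x y ↔ ∃ a ∈ Vx x, ∃ b ∈ Vx y, H.Adj a b))

/-- `X` is a minor of `G`: some subgraph of `G` is an `IX`. -/
def HasMinor {V : Type u} {W : Type v} (G : SimpleGraph V) (X : SimpleGraph W) : Prop :=
  ∃ H' : G.Subgraph, IsIX H'.coe X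

/-- A ray (one-way infinite path) in `G`. -/
def IsRay {V : Type u} (G : SimpleGraph V) (f : ℕ → V) : Prop :=
  Function.Injective f ∧ ∀ n : ℕ, G.Adj (f n) (f (n + 1))

/-- `U` is a dispersed set of vertices of `G`: every ray of `G` can be separated from `U`
by a finite set `S` of vertices, i.e. no component of `G - S` contains both a vertex of
`U` and a tail of the ray. -/
def Dispersed {V : Type u} (G : SimpleGraph V) (U : Set V) : Prop :=
  ∀ f : ℕ → V, IsRay G f →
    ∃ S : Set V, S.Finite ∧ ∃ m : ℕ, ∀ n ≥ m, ∀ u ∈ U,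
      ∀ (hu : u ∈ Sᶜ) (hn : f n ∈ Sᶜ),
        ¬ (G.induce Sᶜ).Reachable ⟨u, hu⟩ ⟨f n, hn⟩

/-- Every `(ℵ0, ℵ1)`-graph has an induced `(ℵ0, ℵ1)`-subgraph in which, additionally,
every vertex of the countable class has uncountable degree. -/
theorem stmt5 {V : Type u} (X : SimpleGraph V) (A B : Set V)
    (h : IsAleph0Aleph1Graph X A B) :
    ∃ A' B' : Set V, A' ⊆ A ∧ B' ⊆ B ∧
      IsAleph0Aleph1Graph (X.induce (A' ∪ B'))
        {v : ↥(A' ∪ B') | (v : V) ∈ A'} {v : ↥(A' ∪ B') | (v : V) ∈ B'} ∧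
      ∀ v : ↥(A' ∪ B'), (v : V) ∈ A' →
        ¬ ((X.induce (A' ∪ B')).neighborSet v).Countable := by
  classical
  obtain ⟨hdisj, hunion, hA, hB, hbip, hdeg⟩ := h
  have hAcount : A.Countable := by
    rw [← Set.countable_coe_iff]
    exact Cardinal.mk_le_aleph0_iff.mp hA.le
  set A' : Set V := {a | a ∈ A ∧ ¬ (X.neighborSet a).Countable} with hA'def
  have hA'A : A' ⊆ A := fun a ha => ha.1
  set C : Set V := ⋃ a ∈ A \ A', X.neighborSet a with hCdef
  have hCcount : C.Countable := by
    refine Set.Countable.biUnion (hAcount.mono Set.diff_subset) ?_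
    intro a ha
    by_contra hc
    exact ha.2 ⟨ha.1, hc⟩
  set B' : Set V := B \ C with hB'def
  have hB'B : B' ⊆ B := Set.diff_subset
  -- neighbor sets of A-vertices lie in B, of B-vertices in A
  have hNAB : ∀ a ∈ A, X.neighborSet a ⊆ B := by
    intro a ha y hy
    rcases hbip hy with ⟨_, hyB⟩ | ⟨haB, _⟩
    · exact hyB
    · exact absurd haB (Set.disjoint_left.mp hdisj ha)
  have hNBA : ∀ b ∈ B, X.neighborSet b ⊆ A := by
    intro b hb y hy
    rcases hbip hy with ⟨hbA, _⟩ | ⟨_, hyA⟩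
    · exact absurd hb (Set.disjoint_left.mp hdisj hbA)
    · exact hyA
  -- every neighbor of a vertex of B' is in A'
  have hNB'A' : ∀ b ∈ B', X.neighborSet b ⊆ A' := by
    intro b hb y hy
    have hyA : y ∈ A := hNBA b (hB'B hb) hy
    by_contra hyA'
    exact hb.2 (Set.mem_biUnion ⟨hyA, hyA'⟩ hy.symm)
  -- cardinality of B'
  have hBC : (B ∩ C : Set V).Countable := hCcount.mono Set.inter_subset_right
  have hB'card : Cardinal.mk B' = Cardinal.aleph 1 := by
    have h1 : Cardinal.mk (B \ (B ∩ C) : Set V) + Cardinal.mk (B ∩ C : Set V) =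
        Cardinal.mk B := Cardinal.mk_diff_add_mk Set.inter_subset_left
    rw [Set.diff_self_inter] at h1
    have hle : Cardinal.mk B' ≤ Cardinal.aleph 1 := by
      rw [← hB]; exact Cardinal.mk_le_mk_of_subset hB'B
    rcases hle.lt_or_eq with hlt | heq
    · exfalso
      have h2 : Cardinal.mk (B ∩ C : Set V) < Cardinal.aleph 1 :=
        lt_of_le_of_lt hBC.le_aleph0 Cardinal.aleph0_lt_aleph_one
      have := Cardinal.add_lt_of_lt (Cardinal.aleph0_le_aleph 1) hlt h2
      rw [h1, hB] at this
      exact lt_irrefl _ this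
    · exact heq
  -- B' is nonempty, hence A' is infinite
  have hB'ne : B'.Nonempty := by
    rw [← Set.nonempty_coe_sort, ← Cardinal.mk_ne_zero_iff, hB'card]
    exact (Cardinal.aleph_pos 1).ne'
  obtain ⟨b0, hb0⟩ := hB'ne
  have hA'inf : A'.Infinite :=
    (hdeg b0 (hB'B hb0)).mono (hNB'A' b0 hb0)
  have hA'card : Cardinal.mk A' = Cardinal.aleph0 := by
    have := hA'inf.to_subtype
    exact le_antisymm (hAcount.mono hA'A).le_aleph0 (Cardinal.aleph0_le_mk _)
  refine ⟨A', B', hA'A, hB'B, ?_, ?_⟩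
  · -- the induced graph is an (ℵ0, ℵ1)-graph
    have hdisj' : Disjoint A' B' :=
      hdisj.mono hA'A hB'B
    refine ⟨?_, ?_, ?_, ?_, ?_, ?_⟩
    · rw [Set.disjoint_left]
      rintro ⟨v, hv⟩ hvA' hvB'
      exact Set.disjoint_left.mp hdisj' hvA' hvB'
    · ext ⟨v, hv⟩
      simp only [Set.mem_union, Set.mem_setOf_eq, Set.mem_univ, iff_true]
      exact hv
    · have e : {v : ↥(A' ∪ B') | (v : V) ∈ A'} ≃ ↥A' :=
        ⟨fun v => ⟨v.1.1, v.2⟩, fun a => ⟨⟨a.1, Or.inl a.2⟩, a.2⟩,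
          fun v => by ext; rfl, fun a => rfl⟩
      rw [Cardinal.mk_congr e, hA'card]
    · have e : {v : ↥(A' ∪ B') | (v : V) ∈ B'} ≃ ↥B' :=
        ⟨fun v => ⟨v.1.1, v.2⟩, fun b => ⟨⟨b.1, Or.inr b.2⟩, b.2⟩,
          fun v => by ext; rfl, fun b => rfl⟩
      rw [Cardinal.mk_congr e, hB'card]
    · rintro ⟨x, hx⟩ ⟨y, hy⟩ hadj
      have hxy : X.Adj x y := hadj
      have key : ∀ u : V, u ∈ A' ∪ B' → u ∈ A → u ∈ A' := by
        intro u hu huA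
        rcases hu with h' | h'
        · exact h'
        · exact absurd huA (Set.disjoint_right.mp hdisj (hB'B h'))
      have key' : ∀ u : V, u ∈ A' ∪ B' → u ∈ B → u ∈ B' := by
        intro u hu huB
        rcases hu with h' | h'
        · exact absurd huB (Set.disjoint_left.mp hdisj (hA'A h'))
        · exact h'
      rcases hbip hxy with ⟨hxA, hyB⟩ | ⟨hxB, hyA⟩
      · exact Or.inl ⟨key x hx hxA, key' y hy hyB⟩
      · exact Or.inr ⟨key' x hx hxB, key y hy hyA⟩
    · -- vertices of B' have infinite degree
      rintro ⟨b, hb⟩ hbB'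
      have hNinf : (X.neighborSet b).Infinite := hdeg b (hB'B hbB')
      have hsub : X.neighborSet b ⊆
          Subtype.val '' ((X.induce (A' ∪ B')).neighborSet ⟨b, hb⟩) := by
        intro y hy
        exact ⟨⟨y, Or.inl (hNB'A' b hbB' hy)⟩, hy, rfl⟩
      exact Set.Infinite.of_image Subtype.val (hNinf.mono hsub)
  · -- vertices of A' have uncountable degree
    rintro ⟨a, ha⟩ haA' hcount
    have hsub : (X.neighborSet a ∩ B' : Set V).Countable := by
      have : (X.neighborSet a ∩ B' : Set V) ⊆
          Subtype.val '' ((X.induce (A' ∪ B')).neighborSet ⟨a, ha⟩) := by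
        rintro y ⟨hy1, hy2⟩
        exact ⟨⟨y, Or.inr hy2⟩, hy1, rfl⟩
      exact (hcount.image Subtype.val).mono this
    have hNa : (X.neighborSet a).Countable := by
      have hsplit : X.neighborSet a ⊆ (X.neighborSet a ∩ B') ∪ (B ∩ C) := by
        intro y hy
        have hyB : y ∈ B := hNAB a (hA'A haA') hy
        by_cases hyC : y ∈ C
        · exact Or.inr ⟨hyB, hyC⟩
        · exact Or.inl ⟨hy, hyB, hyC⟩
      exact (hsub.union hBC).mono hsplit
    exact haA'.2 hNa
end

section
/- Let X be an (ℵ0,ℵ1)-graph with bipartition (A,B), and let A' ⊆ A be infinite and such that for every two distinct vertices a, a' ∈ A' there is an uncountable set B(a,a') ⊆ B of common neighbours of a and a'. Then X contains a fat TK_ℵ0 whose set of branch vertices is A' and whose subdivided edges are all paths of the form a b a' with a, a' ∈ A' and b ∈ B(a,a'). -/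
universe u v

open Cardinal

/-- Index type of size ℵ₁ with countable initial segments. -/
abbrev MyIdx : Type := (Cardinal.aleph 1).ord.ToType

lemma countable_Iio_myIdx (a : MyIdx) : (Set.Iio a).Countable := by
  rw [Cardinal.countable_iff_lt_aleph_one]
  exact Cardinal.mk_Iio_ord_toType a

lemma exists_fresh {V : Type u} {S T : Set V} (hS : ¬ S.Countable) (hT : T.Countable) :
    ∃ v, v ∈ S ∧ v ∉ T := by
  by_contra hc
  push_neg at hc
  exact hS (hT.mono hc)

lemma disjoint_refinement {V : Type u} (S : ℕ → Set V) (hS : ∀ n, ¬ (S n).Countable) :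
    ∃ g : MyIdx × ℕ → V, Function.Injective g ∧ ∀ p, g p ∈ S p.2 := by
  classical
  set r : MyIdx × ℕ → MyIdx × ℕ → Prop := Prod.Lex (· < ·) (· < ·) with hr
  have wf : WellFounded r := WellFounded.prod_lex wellFounded_lt wellFounded_lt
  have hcs : ∀ p : MyIdx × ℕ, Countable {q // r q p} := by
    intro p
    have hIic : (Set.Iic p.1).Countable := by
      rw [← Set.Iio_union_right]
      exact (countable_Iio_myIdx p.1).union (Set.countable_singleton _)
    haveI := hIic.to_subtype
    refine Function.Injective.countable
      (f := fun q : {q // r q p} => ((⟨q.1.1, ?_⟩ : Set.Iic p.1), q.1.2)) ?_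
    · rcases Prod.lex_def.mp q.2 with h | h
      · exact le_of_lt h
      · exact le_of_eq h.1
    · intro q q' hqq
      simp only [Prod.mk.injEq, Subtype.mk.injEq] at hqq
      exact Subtype.ext (Prod.ext hqq.1 hqq.2)
  haveI := hcs
  let Φ : ∀ p : MyIdx × ℕ, (∀ q, r q p → V) → V := fun p ih =>
    (exists_fresh (hS p.2)
      (Set.countable_range (fun q : {q // r q p} => ih q.1 q.2))).choose
  let g : MyIdx × ℕ → V := wf.fix Φ
  have hg : ∀ p, g p = Φ p (fun q _ => g q) := fun p => wf.fix_eq Φ p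
  have key : ∀ p, g p ∈ S p.2 ∧ ∀ q, r q p → g q ≠ g p := by
    intro p
    have hsp := (exists_fresh (hS p.2)
      (Set.countable_range (fun q : {q // r q p} => g q.1))).choose_spec
    rw [hg p]
    refine ⟨hsp.1, fun q hq hqp => hsp.2 ⟨⟨q, hq⟩, hqp⟩⟩
  refine ⟨g, ?_, fun p => (key p).1⟩
  intro p q hpq
  by_contra hne
  have htri : r p q ∨ r q p := by
    rcases lt_trichotomy p.1 q.1 with h1 | h1 | h1
    · exact Or.inl (Prod.lex_def.mpr (Or.inl h1))
    · rcases lt_trichotomy p.2 q.2 with h2 | h2 | h2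
      · exact Or.inl (Prod.lex_def.mpr (Or.inr ⟨h1, h2⟩))
      · exact absurd (Prod.ext h1 h2) hne
      · exact Or.inr (Prod.lex_def.mpr (Or.inr ⟨h1.symm, h2⟩))
    · exact Or.inr (Prod.lex_def.mpr (Or.inl h1))
  rcases htri with h | h
  · exact (key q).2 p h hpq
  · exact (key p).2 q h hpq.symm


/-- If `A' ⊆ A` is infinite and every two distinct vertices of `A'` have an uncountable
set `Bf a a'` of common neighbours in `B`, then `X` contains a fat `TK_ℵ0` whose branch
vertices are exactly `A'` and whose subdivided edges all have the form `a b a'` with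
`b ∈ Bf a a'`. -/
theorem stmt7 {V : Type u} (X : SimpleGraph V) (A B : Set V)
    (h : IsAleph0Aleph1Graph X A B)
    (A' : Set V) (hA'A : A' ⊆ A) (hA' : A'.Infinite)
    (Bf : V → V → Set V)
    (hBf : ∀ a ∈ A', ∀ a' ∈ A', a ≠ a' →
      Bf a a' ⊆ B ∧ ¬ (Bf a a').Countable ∧
      ∀ b ∈ Bf a a', X.Adj a b ∧ X.Adj a' b) :
    ∃ K : FatTKAleph0 X, Set.range K.branch = A' ∧
      ∀ (i j : ℕ) (hij : i < j) (α : K.Idx),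
        ∃ b ∈ Bf (K.branch i) (K.branch j),
          (K.path i j hij α).support = [K.branch i, b, K.branch j] := by
  
  classical
  obtain ⟨hdisj, -, hAcard, hBcard, -, -⟩ := h
  -- enumeration of A'
  haveI : Countable ↥A := Cardinal.mk_le_aleph0_iff.mp hAcard.le
  haveI : Countable ↥A' := (Set.Countable.mono hA'A ((Set.countable_coe_iff).mp ‹_›)).to_subtype
  haveI : Infinite ↥A' := hA'.to_subtype
  obtain ⟨e⟩ : Nonempty (ℕ ≃ ↥A') := nonempty_equiv_of_countable
  set branch : ℕ → V := fun n => (e n : V) with hbranch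
  have hbrA' : ∀ n, branch n ∈ A' := fun n => (e n).2
  have binj : Function.Injective branch := fun m n hmn => e.injective (Subtype.ext hmn)
  have hnotB : ∀ n, ∀ v ∈ B, branch n ≠ v := fun n v hv heq =>
    Set.disjoint_left.mp hdisj (hA'A (hbrA' n)) (heq ▸ hv)
  -- uncountability of B
  have hBunc : ¬ B.Countable := by
    rw [Cardinal.countable_iff_lt_aleph_one, hBcard]
    exact lt_irrefl _
  -- pair coding
  set d : ℕ × ℕ ≃ ℕ := Nat.pairEquiv with hd
  set S : ℕ → Set V := fun n =>
    if (d.symm n).1 < (d.symm n).2 then Bf (branch (d.symm n).1) (branch (d.symm n).2)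
    else B with hSdef
  have hBfprop : ∀ i j : ℕ, i < j → Bf (branch i) (branch j) ⊆ B ∧
      ¬ (Bf (branch i) (branch j)).Countable ∧
      ∀ b ∈ Bf (branch i) (branch j), X.Adj (branch i) b ∧ X.Adj (branch j) b :=
    fun i j hij => hBf _ (hbrA' i) _ (hbrA' j) (fun hh => (Nat.lt_irrefl i) (binj hh ▸ hij))
  have hS : ∀ n, ¬ (S n).Countable := by
    intro n
    simp only [hSdef]
    split
    · exact (hBfprop _ _ ‹_›).2.1
    · exact hBunc
  obtain ⟨g, ginj, gmem⟩ := disjoint_refinement S hS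
  -- the internal vertices
  set b : ℕ → ℕ → MyIdx → V := fun i j α => g (α, d (i, j)) with hbdef
  have hbmem : ∀ i j : ℕ, i < j → ∀ α, b i j α ∈ Bf (branch i) (branch j) := by
    intro i j hij α
    have := gmem (α, d (i, j))
    simp only [hSdef, Equiv.symm_apply_apply] at this
    rwa [if_pos hij] at this
  have hbB : ∀ i j : ℕ, i < j → ∀ α, b i j α ∈ B :=
    fun i j hij α => (hBfprop i j hij).1 (hbmem i j hij α)
  have hbne : ∀ (i j : ℕ) (α : MyIdx) (i' j' : ℕ) (α' : MyIdx),
      (i, j, α) ≠ (i', j', α') → b i j α ≠ b i' j' α' := by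
    intro i j α i' j' α' hne heq
    apply hne
    have := ginj heq
    rw [Prod.mk.injEq] at this
    obtain ⟨h1, h2⟩ := this
    obtain ⟨h3, h4⟩ := Prod.mk.injEq .. ▸ d.injective h2
    simp [h1, h3, h4]
  -- the paths
  have hadj : ∀ (i j : ℕ) (hij : i < j) (α : MyIdx),
      X.Adj (branch i) (b i j α) ∧ X.Adj (branch j) (b i j α) :=
    fun i j hij α => (hBfprop i j hij).2.2 _ (hbmem i j hij α)
  set P : ∀ i j : ℕ, i < j → MyIdx → X.Walk (branch i) (branch j) :=
    fun i j hij α => SimpleGraph.Walk.cons (hadj i j hij α).1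
      (SimpleGraph.Walk.cons (hadj i j hij α).2.symm SimpleGraph.Walk.nil) with hP
  have hsupp : ∀ (i j : ℕ) (hij : i < j) (α : MyIdx),
      (P i j hij α).support = [branch i, b i j α, branch j] := by
    intro i j hij α
    simp [hP]
  refine ⟨⟨branch, binj, MyIdx, Cardinal.mk_ord_toType _, P, ?_, ?_, ?_, ?_⟩, ?_, ?_⟩
  · -- isPath
    intro i j hij α
    rw [SimpleGraph.Walk.isPath_def, hsupp i j hij α]
    have h1 : branch i ≠ b i j α := hnotB i _ (hbB i j hij α)
    have h2 : branch i ≠ branch j := fun hh => Nat.lt_irrefl i (binj hh ▸ hij)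
    have h3 : branch j ≠ b i j α := hnotB j _ (hbB i j hij α)
    simp [h1, h2, h3, Ne.symm h3]
  · -- branch_not_internal
    intro i j hij α k hk
    rw [hsupp i j hij α] at hk
    simp only [List.mem_cons, List.mem_singleton, List.not_mem_nil, or_false] at hk
    rcases hk with hk | hk | hk
    · exact Or.inl (binj hk)
    · exact absurd hk (hnotB k _ (hbB i j hij α))
    · exact Or.inr (binj hk)
  · -- internally_disjoint
    intro i j hij α i' j' hij' α' hne w hw hw'
    rw [hsupp i j hij α] at hw
    rw [hsupp i' j' hij' α'] at hw'
    simp only [List.mem_cons, List.mem_singleton, List.not_mem_nil, or_false] at hw hw'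
    have hfix : ∀ (m : ℕ), w = branch m → (w = branch i' ∨ w = branch j') := by
      intro m hm
      rcases hw' with hw' | hw' | hw'
      · exact Or.inl hw'
      · exact absurd (hm ▸ hw') (hnotB m _ (hbB i' j' hij' α'))
      · exact Or.inr hw'
    rcases hw with hw | hw | hw
    · exact ⟨Or.inl hw, hfix i hw⟩
    · -- w is the internal vertex b i j α; impossible
      exfalso
      rcases hw' with hw' | hw' | hw'
      · exact hnotB i' _ (hbB i j hij α) (hw ▸ hw').symm
      · exact hbne i j α i' j' α' hne (hw ▸ hw' ▸ rfl)
      · exact hnotB j' _ (hbB i j hij α) (hw ▸ hw').symm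
    · exact ⟨Or.inr hw, hfix j hw⟩
  · -- path_ne
    intro i j hij α α' hαα' heq
    have := congrArg SimpleGraph.Walk.support heq
    rw [hsupp i j hij α, hsupp i j hij α'] at this
    have hb : b i j α = b i j α' := by
      simp only [List.cons.injEq] at this
      exact this.2.1
    exact hbne i j α i j α' (by simp [hαα']) hb
  · -- range branch = A'
    ext v
    constructor
    · rintro ⟨n, rfl⟩
      exact hbrA' n
    · intro hv
      exact ⟨e.symm ⟨v, hv⟩, by simp [hbranch]⟩
  · -- the paths have the required form
    intro i j hij α
    exact ⟨b i j α, hbmem i j hij α, hsupp i j hij α⟩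
end

section
/- Every Aronszajn-tree graph contains a fat TK_ℵ0 as a subgraph. -/
universe u v

namespace ATProof
open Cardinal Set

noncomputable def w1 : Ordinal.{u} := (Cardinal.aleph 1).ord

theorem lt_w1_iff {o : Ordinal.{u}} : o < w1 ↔ o.card ≤ ℵ₀ := by
  rw [w1, Cardinal.lt_ord]
  have h1 : (Cardinal.aleph 1) = Order.succ ℵ₀ := by
    rw [← Cardinal.aleph_zero, ← Cardinal.aleph_succ, Ordinal.succ_zero]
  rw [h1, Order.lt_succ_iff]

theorem succ_lt_w1 {o : Ordinal.{u}} (h : o < w1) : o + 1 < w1 := by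
  rw [lt_w1_iff] at h ⊢
  rw [Ordinal.card_add, Ordinal.card_one]
  exact (Cardinal.add_le_aleph0.2 ⟨h, Cardinal.one_le_aleph0⟩)

theorem sup_lt_w1 {f : ℕ → Ordinal.{u}} (h : ∀ n, f n < w1) : (⨆ n, f n) < w1 := by
  refine Cardinal.iSup_lt_ord_lift_of_isRegular Cardinal.isRegular_aleph_one ?_ h
  simpa using Cardinal.aleph0_lt_aleph_one

def IsClub (C : Set Ordinal.{u}) : Prop :=
  C ⊆ Iio w1 ∧ (∀ β < w1, ∃ γ ∈ C, β < γ) ∧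
    ∀ α, 0 < α → α < w1 → (∀ β < α, ∃ γ ∈ C, β < γ ∧ γ < α) → α ∈ C

def IsStat (S : Set Ordinal.{u}) : Prop :=
  S ⊆ Iio w1 ∧ ∀ C, IsClub C → (S ∩ C).Nonempty

theorem w1_pos : (0 : Ordinal.{u}) < w1 := lt_w1_iff.2 (by simp)

theorem club_Iio : IsClub (Iio w1.{u}) :=
  ⟨subset_rfl, fun β hβ => ⟨β + 1, succ_lt_w1 hβ, by simp⟩, fun α _ hα _ => hα⟩

/-- climbing through countably many clubs -/
theorem climb (C : ℕ → Set Ordinal.{u}) (hC : ∀ n, IsClub (C n)) {β : Ordinal.{u}}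
    (hβ : β < w1) : ∃ σ, β < σ ∧ σ < w1 ∧ ∀ n, σ ∈ C n := by
  have pick : ∀ (n : ℕ) (γ : Ordinal.{u}), γ < w1 →
      {δ : Ordinal.{u} // δ ∈ C n ∧ γ < δ ∧ δ < w1} := by
    intro n γ hγ
    have := (hC n).2.1 γ hγ
    exact ⟨Classical.choose this, (Classical.choose_spec this).1,
      (Classical.choose_spec this).2, (hC n).1 (Classical.choose_spec this).1⟩
  let d : ℕ → {o : Ordinal.{u} // o < w1} := fun k => Nat.rec
    ⟨β + 1, succ_lt_w1 hβ⟩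
    (fun k prev => let p := pick (Nat.unpair k).1 prev.1 prev.2
      ⟨p.1, p.2.2.2⟩) k
  have dmem : ∀ k, (d (k+1)).1 ∈ C (Nat.unpair k).1 := fun k =>
    (pick (Nat.unpair k).1 (d k).1 (d k).2).2.1
  have dlt : ∀ k, (d k).1 < (d (k+1)).1 := fun k =>
    (pick (Nat.unpair k).1 (d k).1 (d k).2).2.2.1
  have dmono : ∀ {k m}, k ≤ m → (d k).1 ≤ (d m).1 := by
    intro k m h
    induction m with
    | zero => simp_all
    | succ m ih =>
      rcases Nat.lt_or_ge k (m+1) with h' | h'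
      · exact le_trans (ih (Nat.lt_succ_iff.1 h')) (dlt m).le
      · have : k = m + 1 := le_antisymm h h'
        simp [this]
  set σ := ⨆ k, (d k).1 with hσ
  have hle : ∀ k, (d k).1 ≤ σ := fun k => Ordinal.le_iSup (fun k => (d k).1) k
  have hltσ : ∀ k, (d k).1 < σ := fun k => lt_of_lt_of_le (dlt k) (hle (k+1))
  have hσw1 : σ < w1 := sup_lt_w1 fun k => (d k).2
  have hd0 : (d 0).1 = β + 1 := rfl
  have hβσ : β < σ := lt_of_lt_of_le (by rw [hd0]; exact lt_add_one β) (hle 0)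
  refine ⟨σ, hβσ, hσw1, fun n => ?_⟩
  refine (hC n).2.2 σ (lt_of_le_of_lt (zero_le (a := β)) hβσ) hσw1 ?_
  intro β' hβ'
  rw [hσ, Ordinal.lt_iSup_iff] at hβ'
  obtain ⟨k, hk⟩ := hβ'
  refine ⟨(d (Nat.pair n k + 1)).1, ?_, ?_, hltσ (Nat.pair n k + 1)⟩
  · have := dmem (Nat.pair n k)
    rwa [Nat.unpair_pair] at this
  · exact lt_of_lt_of_le hk (le_trans (dmono (Nat.right_le_pair n k))
      (dlt (Nat.pair n k)).le)

theorem climbSet (s : Set Ordinal.{u}) (hs : s.Countable) (C : Ordinal.{u} → Set Ordinal.{u})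
    (h : ∀ γ ∈ s, IsClub (C γ)) {β : Ordinal.{u}} (hβ : β < w1) :
    ∃ σ, β < σ ∧ σ < w1 ∧ ∀ γ ∈ s, σ ∈ C γ := by
  rcases s.eq_empty_or_nonempty with rfl | hne
  · exact ⟨β + 1, by simp, succ_lt_w1 hβ, by simp⟩
  · obtain ⟨f, rfl⟩ := hs.exists_eq_range hne
    obtain ⟨σ, h1, h2, h3⟩ := climb (fun n => C (f n)) (fun n => h _ ⟨n, rfl⟩) hβ
    exact ⟨σ, h1, h2, by rintro γ ⟨n, rfl⟩; exact h3 n⟩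

theorem club_isStat {C : Set Ordinal.{u}} (hC : IsClub C) : IsStat C := by
  refine ⟨hC.1, fun D hD => ?_⟩
  obtain ⟨σ, -, -, hσ⟩ := climb (fun n => if n % 2 = 0 then C else D)
    (fun n => by split <;> assumption) w1_pos
  have h0 := hσ 0
  have h1 := hσ 1
  norm_num at h0 h1
  exact ⟨σ, h0, h1⟩

theorem inter_club {S : Set Ordinal.{u}} (hS : IsStat S) {C : Set Ordinal.{u}}
    (hC : IsClub C) : IsStat (S ∩ C) := by
  refine ⟨fun x hx => hS.1 hx.1, fun D hD => ?_⟩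
  have hclub : IsClub (C ∩ D) := by
    refine ⟨fun x hx => hC.1 hx.1, fun β hβ => ?_, fun α h0 hα hacc => ?_⟩
    · obtain ⟨σ, h1, h2, h3⟩ := climb (fun n => if n % 2 = 0 then C else D)
        (fun n => by split <;> assumption) hβ
      have h0 := h3 0; have h1' := h3 1
      norm_num at h0 h1'
      exact ⟨σ, ⟨h0, h1'⟩, h1⟩
    · exact ⟨hC.2.2 α h0 hα (fun β hβ => (hacc β hβ).imp fun γ hγ => ⟨hγ.1.1, hγ.2⟩),
        hD.2.2 α h0 hα (fun β hβ => (hacc β hβ).imp fun γ hγ => ⟨hγ.1.2, hγ.2⟩)⟩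
  obtain ⟨α, hα⟩ := hS.2 _ hclub
  exact ⟨α, ⟨hα.1, hα.2.1⟩, hα.2.2⟩

/-- the diagonal intersection is a club -/
theorem club_diag (C : Ordinal.{u} → Set Ordinal.{u}) (hC : ∀ γ < w1.{u}, IsClub (C γ)) :
    IsClub {α : Ordinal.{u} | α < w1 ∧ ∀ γ < α, α ∈ C γ} := by
  have countIio : ∀ o : Ordinal.{u}, o < w1 → (Iio o).Countable := by
    intro o ho
    rw [Cardinal.countable_iff_lt_aleph_one, Ordinal.mk_Iio_ordinal]
    rw [lt_w1_iff] at ho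
    calc Cardinal.lift.{u+1} o.card ≤ Cardinal.lift.{u+1} ℵ₀ := by
          exact Cardinal.lift_le.2 ho
      _ < ℵ₁ := by rw [Cardinal.lift_aleph0]; exact aleph0_lt_aleph_one
  constructor
  · exact fun x hx => hx.1
  constructor
  · -- unbounded
    intro β hβ
    have step : ∀ γ : Ordinal.{u}, γ < w1 → {δ : Ordinal.{u} // γ < δ ∧ δ < w1 ∧
        ∀ γ' < γ, γ' < w1 → δ ∈ C γ'} := by
      intro γ hγ
      have := climbSet (Iio γ ∩ Iio w1) ((countIio γ hγ).mono inter_subset_left)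
        C (fun γ' hγ' => hC γ' hγ'.2) hγ
      refine ⟨Classical.choose this, (Classical.choose_spec this).1,
        (Classical.choose_spec this).2.1, fun γ' h1 h2 =>
          (Classical.choose_spec this).2.2 γ' ⟨h1, h2⟩⟩
    let d : ℕ → {o : Ordinal.{u} // o < w1} := fun k => Nat.rec
      ⟨β + 1, succ_lt_w1 hβ⟩
      (fun _ prev => let p := step prev.1 prev.2; ⟨p.1, p.2.2.1⟩) k
    have dlt : ∀ k, (d k).1 < (d (k+1)).1 := fun k => (step (d k).1 (d k).2).2.1
    have dmem : ∀ k γ', γ' < (d k).1 → γ' < w1 → (d (k+1)).1 ∈ C γ' := fun k =>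
      (step (d k).1 (d k).2).2.2.2
    have dmono : ∀ {k m}, k ≤ m → (d k).1 ≤ (d m).1 := by
      intro k m h
      induction m with
      | zero => simp_all
      | succ m ih =>
        rcases Nat.lt_or_ge k (m+1) with h' | h'
        · exact le_trans (ih (Nat.lt_succ_iff.1 h')) (dlt m).le
        · have : k = m + 1 := le_antisymm h h'
          simp [this]
    set σ := ⨆ k, (d k).1 with hσdef
    have hle : ∀ k, (d k).1 ≤ σ := fun k => Ordinal.le_iSup (fun k => (d k).1) k
    have hltσ : ∀ k, (d k).1 < σ := fun k => lt_of_lt_of_le (dlt k) (hle (k+1))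
    have hσw1 : σ < w1 := sup_lt_w1 fun k => (d k).2
    have hd0 : (d 0).1 = β + 1 := rfl
    have hβσ : β < σ := lt_of_lt_of_le (by rw [hd0]; exact lt_add_one β) (hle 0)
    refine ⟨σ, ⟨hσw1, fun γ hγ => ?_⟩, hβσ⟩
    have hγw1 : γ < w1 := hγ.trans hσw1
    rw [hσdef, Ordinal.lt_iSup_iff] at hγ
    obtain ⟨k, hk⟩ := hγ
    refine (hC γ hγw1).2.2 σ (lt_of_le_of_lt zero_le hβσ) hσw1 ?_
    intro β' hβ'
    rw [hσdef, Ordinal.lt_iSup_iff] at hβ'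
    obtain ⟨m, hm⟩ := hβ'
    refine ⟨(d (max m k + 1)).1, ?_, ?_, hltσ (max m k + 1)⟩
    · exact dmem (max m k) γ (lt_of_lt_of_le hk (dmono (le_max_right m k))) hγw1
    · exact lt_of_lt_of_le hm (le_trans (dmono (le_max_left m k)) (dlt _).le)
  · -- closed
    intro α h0 hα hacc
    refine ⟨hα, fun γ hγ => ?_⟩
    have hγw1 : γ < w1 := hγ.trans hα
    refine (hC γ hγw1).2.2 α h0 hα ?_
    intro β hβ
    obtain ⟨δ, hδ1, hδ2, hδ3⟩ := hacc (max β γ) (max_lt hβ hγ)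
    exact ⟨δ, hδ1.2 γ (lt_of_le_of_lt (le_max_right β γ) hδ2),
      lt_of_le_of_lt (le_max_left β γ) hδ2, hδ3⟩

theorem fodor {S : Set Ordinal.{u}} (hS : IsStat S) (f : Ordinal.{u} → Ordinal.{u})
    (hf : ∀ α ∈ S, f α < α) : ∃ γ, IsStat {α | α ∈ S ∧ f α = γ} := by
  by_contra hcon
  push_neg at hcon
  have hsub : ∀ γ, {α | α ∈ S ∧ f α = γ} ⊆ Iio w1 := fun γ x hx => hS.1 hx.1
  have : ∀ γ, ∃ C, IsClub C ∧ {α | α ∈ S ∧ f α = γ} ∩ C = ∅ := by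
    intro γ
    have := hcon γ
    rw [IsStat] at this
    push_neg at this
    obtain ⟨C, hC, hCne⟩ := this (hsub γ)
    exact ⟨C, hC, hCne⟩
  choose C hC hCne using this
  obtain ⟨α, hαS, hαD⟩ := hS.2 _ (club_diag C (fun γ _ => hC γ))
  have hfα := hf α hαS
  have : α ∈ C (f α) := hαD.2 (f α) hfα
  have : α ∈ {α' | α' ∈ S ∧ f α' = f α} ∩ C (f α) := ⟨⟨hαS, rfl⟩, this⟩
  rw [hCne] at this
  exact this

theorem stat_pigeon {S : Set Ordinal.{u}} (hS : IsStat S) (A : ℕ → Set Ordinal.{u})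
    (hsub : S ⊆ ⋃ n, A n) : ∃ n, IsStat (S ∩ A n) := by
  by_contra hcon
  push_neg at hcon
  have : ∀ n, ∃ C, IsClub C ∧ (S ∩ A n) ∩ C = ∅ := by
    intro n
    have := hcon n
    rw [IsStat] at this
    push_neg at this
    obtain ⟨C, hC, hCne⟩ := this (fun x hx => hS.1 hx.1)
    exact ⟨C, hC, hCne⟩
  choose C hC hCne using this
  have hclub : IsClub (Iio w1 ∩ ⋂ n, C n) := by
    refine ⟨fun x hx => hx.1, fun β hβ => ?_, fun α h0 hα hacc => ?_⟩
    · obtain ⟨σ, h1, h2, h3⟩ := climb C hC hβ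
      exact ⟨σ, ⟨h2, Set.mem_iInter.2 h3⟩, h1⟩
    · refine ⟨hα, Set.mem_iInter.2 fun n => ?_⟩
      refine (hC n).2.2 α h0 hα ?_
      intro β hβ
      obtain ⟨δ, hδ1, hδ2, hδ3⟩ := hacc β hβ
      exact ⟨δ, Set.mem_iInter.1 hδ1.2 n, hδ2, hδ3⟩
  obtain ⟨σ, hσS, hσC⟩ := hS.2 _ hclub
  obtain ⟨n, hn⟩ := Set.mem_iUnion.1 (hsub hσS)
  have : σ ∈ (S ∩ A n) ∩ C n := ⟨⟨hσS, hn⟩, Set.mem_iInter.1 hσC.2 n⟩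
  rw [hCne] at this
  exact this

theorem stat_limits : IsStat {α : Ordinal.{u} | α < w1 ∧ Order.IsSuccLimit α} := by
  refine club_isStat ⟨fun x hx => hx.1, fun β hβ => ?_, fun α h0 hα hacc => ?_⟩
  · refine ⟨β + Ordinal.omega0, ⟨?_, Ordinal.isSuccLimit_add β Ordinal.isSuccLimit_omega0⟩, ?_⟩
    · rw [lt_w1_iff, Ordinal.card_add, Ordinal.card_omega0]
      rw [lt_w1_iff] at hβ
      exact Cardinal.add_le_aleph0.2 ⟨hβ, le_rfl⟩
    · simpa using Ordinal.omega0_pos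
  · refine ⟨hα, Ordinal.isSuccLimit_iff.2 ⟨?_, Order.isSuccPrelimit_of_succ_lt fun β hβ => ?_⟩⟩
    · exact h0.ne'
    · obtain ⟨δ, _, hδ2, hδ3⟩ := hacc β hβ
      exact lt_of_le_of_lt (Order.succ_le_of_lt hδ2) hδ3

theorem stat_nonempty {S : Set Ordinal.{u}} (hS : IsStat S) : S.Nonempty := by
  obtain ⟨α, hα, -⟩ := hS.2 _ club_Iio
  exact ⟨α, hα⟩

theorem stat_not_countable {S : Set Ordinal.{u}} (hS : IsStat S) : ¬ S.Countable := by
  intro hc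
  rcases S.eq_empty_or_nonempty with rfl | hne
  · obtain ⟨α, hα, -⟩ := hS.2 _ club_Iio
    exact hα
  obtain ⟨f, rfl⟩ := hc.exists_eq_range hne
  set τ := ⨆ n, f n with hτdef
  have hτ : τ < w1 := sup_lt_w1 (fun n => hS.1 ⟨n, rfl⟩)
  have hmem : ∀ x ∈ range f, x ≤ τ := by
    rintro x ⟨n, rfl⟩
    exact Ordinal.le_iSup f n
  have hclub : IsClub (Ioi τ ∩ Iio w1) := by
    refine ⟨fun x hx => hx.2, fun β hβ => ?_, fun α h0 hα hacc => ?_⟩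
    · exact ⟨max τ β + 1, ⟨(le_max_left τ β).trans_lt (lt_add_one _),
        succ_lt_w1 (max_lt hτ hβ)⟩, (le_max_right τ β).trans_lt (lt_add_one _)⟩
    · obtain ⟨δ, hδ1, -, hδ3⟩ := hacc 0 h0
      exact ⟨lt_trans hδ1.1 hδ3, hα⟩
  obtain ⟨σ, hσS, hσC⟩ := hS.2 (Ioi τ ∩ Iio w1) hclub
  exact absurd hσC.1 (not_lt.2 (hmem σ hσS))

section Tree
variable {V : Type u} [PartialOrder V]

/-- the strict order on the set of predecessors of `v` -/
def rel (v : V) : ↥(Iio v) → ↥(Iio v) → Prop := fun a b => a.1 < b.1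

variable (hchain : ∀ t : V, IsChain (· ≤ ·) (Set.Iic t))
variable (hwf : ∀ t : V, (Set.Iic t).WellFoundedOn (· < ·))

include hchain hwf

theorem comp_below {x y u : V} (hx : x ≤ u) (hy : y ≤ u) : x ≤ y ∨ y ≤ x := by
  rcases eq_or_ne x y with rfl | hne
  · exact Or.inl le_rfl
  · exact hchain u hx hy hne

theorem relWO (v : V) : IsWellOrder ↥(Iio v) (rel v) where
  trichotomous := by
    intro a b h1 h2
    rcases eq_or_ne a b with rfl | hne
    · rfl
    · have : a.1 ≤ b.1 ∨ b.1 ≤ a.1 :=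
        comp_below hchain hwf a.2.le b.2.le
      rcases this with h | h
      · exact absurd (lt_of_le_of_ne h (fun he => hne (Subtype.ext he))) h1
      · exact absurd (lt_of_le_of_ne h (fun he => hne (Subtype.ext he.symm))) h2
  wf := (hwf v).subset (fun x (hx : x ∈ Iio v) => hx.le)

/-- the height of a vertex in the tree order -/
noncomputable def ht (v : V) : Ordinal.{u} :=
  @Ordinal.type _ (rel v) (relWO hchain hwf v)

/-- `Iio x` is a principal segment of `Iio y` when `x < y`. -/
noncomputable def htSeg {x y : V} (h : x < y) :
    @PrincipalSeg _ _ (rel x) (rel y) where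
  toFun := Set.inclusion (fun z (hz : z ∈ Iio x) => lt_trans hz h)
  inj' := Set.inclusion_injective _
  map_rel_iff' := Iff.rfl
  top := ⟨x, h⟩
  mem_range_iff_rel' := by
    intro b
    constructor
    · rintro ⟨a, rfl⟩
      exact a.2
    · intro hb
      exact ⟨⟨b.1, hb⟩, Subtype.ext rfl⟩

theorem ht_eq_typein {x y : V} (h : x < y) :
    ht hchain hwf x = @Ordinal.typein _ (rel y) (relWO hchain hwf y) ⟨x, h⟩ := by
  have := @Ordinal.typein_top _ _ (rel x) (rel y) (relWO hchain hwf x)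
    (relWO hchain hwf y) (htSeg h)
  exact this.symm

theorem ht_lt_ht {x y : V} (h : x < y) : ht hchain hwf x < ht hchain hwf y := by
  rw [ht_eq_typein hchain hwf h]
  exact @Ordinal.typein_lt_type _ (rel y) (relWO hchain hwf y) _

theorem exists_ht_eq_of_lt {y : V} {α : Ordinal.{u}} (h : α < ht hchain hwf y) :
    ∃ x : V, x < y ∧ ht hchain hwf x = α := by
  obtain ⟨a, ha⟩ := @Ordinal.typein_surj _ (rel y) (relWO hchain hwf y) _ h
  refine ⟨a.1, a.2, ?_⟩
  rw [ht_eq_typein hchain hwf a.2]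
  rw [← ha]

theorem lt_of_ht_lt {x y u : V} (hx : x ≤ u) (hy : y ≤ u)
    (h : ht hchain hwf x < ht hchain hwf y) : x < y := by
  rcases comp_below hchain hwf hx hy with h' | h'
  · exact lt_of_le_of_ne h' (by rintro rfl; exact lt_irrefl _ h)
  · rcases eq_or_lt_of_le h' with rfl | h''
    · exact absurd h (lt_irrefl _)
    · exact absurd (ht_lt_ht hchain hwf h'') (not_lt.2 h.le)

theorem ht_injOn_below {x y u : V} (hx : x ≤ u) (hy : y ≤ u)
    (h : ht hchain hwf x = ht hchain hwf y) : x = y := by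
  rcases comp_below hchain hwf hx hy with h' | h'
  · rcases eq_or_lt_of_le h' with h'' | h''
    · exact h''
    · exact absurd (ht_lt_ht hchain hwf h'') (by rw [h]; exact lt_irrefl _)
  · rcases eq_or_lt_of_le h' with h'' | h''
    · exact h''.symm
    · exact absurd (ht_lt_ht hchain hwf h'') (by rw [h]; exact lt_irrefl _)

theorem ht_lt_w1 (hcount : ∀ C : Set V, IsChain (· ≤ ·) C → C.Countable) (v : V) : ht hchain hwf v < w1 := by
  rw [lt_w1_iff]
  have : (ht hchain hwf v).card = #↥(Iio v) := @Ordinal.card_type _ (rel v) (relWO hchain hwf v)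
  rw [this]
  rw [Cardinal.mk_le_aleph0_iff, Set.countable_coe_iff]
  exact hcount _ ((hchain v).mono (fun z (hz : z ∈ Iio v) => hz.le))

/-- vertices of equal height give order isomorphic `Iio`s -/
theorem level_countable (hlevel : ∀ t : V, {s : V | Nonempty (↥(Set.Iio s) ≃o ↥(Set.Iio t))}.Countable) (t : V) : {s : V | ht hchain hwf s = ht hchain hwf t}.Countable := by
  refine (hlevel t).mono ?_
  intro s hs
  have : Nonempty (rel s ≃r rel t) := by
    have := hs
    simp only [mem_setOf_eq, ht] at this
    exact (@Ordinal.type_eq _ _ (rel s) (rel t) (relWO hchain hwf s) (relWO hchain hwf t)).1 this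
  obtain ⟨e⟩ := this
  refine ⟨{ toEquiv := e.toEquiv, map_rel_iff' := ?_ }⟩
  intro a b
  show e a ≤ e b ↔ a ≤ b
  constructor
  · intro hab
    rcases eq_or_ne a b with rfl | hne
    · exact le_rfl
    · have : e a ≠ e b := fun h => hne (e.injective h)
      have hlt : (e a).1 < (e b).1 := lt_of_le_of_ne hab (fun h => this (Subtype.ext h))
      exact (e.map_rel_iff.1 hlt).le
  · intro hab
    rcases eq_or_ne a b with rfl | hne
    · exact le_rfl
    · have hlt : a.1 < b.1 := lt_of_le_of_ne hab (fun h => hne (Subtype.ext h))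
      exact (e.map_rel_iff.2 hlt).le.trans le_rfl

omit hchain hwf in
theorem countable_Iio_of_lt_w1 {o : Ordinal.{u}} (ho : o < w1) : (Iio o).Countable := by
  rw [Cardinal.countable_iff_lt_aleph_one, Ordinal.mk_Iio_ordinal]
  rw [lt_w1_iff] at ho
  calc Cardinal.lift.{u+1} o.card ≤ Cardinal.lift.{u+1} ℵ₀ := Cardinal.lift_le.2 ho
    _ < ℵ₁ := by rw [Cardinal.lift_aleph0]; exact aleph0_lt_aleph_one

theorem bounded_countable (hlevel : ∀ t : V, {s : V | Nonempty (↥(Set.Iio s) ≃o ↥(Set.Iio t))}.Countable) {δ : Ordinal.{u}} (hδ : δ < w1) :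
    {v : V | ht hchain hwf v < δ}.Countable := by
  have : {v : V | ht hchain hwf v < δ} = ⋃ α ∈ Iio δ, {v : V | ht hchain hwf v = α} := by
    ext v
    simp only [mem_setOf_eq, mem_iUnion, mem_Iio, exists_prop]
    exact ⟨fun h => ⟨_, h, rfl⟩, fun ⟨α, hα, he⟩ => he ▸ hα⟩
  rw [this]
  refine Set.Countable.biUnion (countable_Iio_of_lt_w1 hδ) ?_
  intro α _
  rcases Set.eq_empty_or_nonempty {v : V | ht hchain hwf v = α} with he | ⟨t, ht'⟩
  · rw [he]; exact countable_empty
  · have : {v : V | ht hchain hwf v = α} ⊆ {s : V | ht hchain hwf s = ht hchain hwf t} := by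
      intro v hv
      simp only [mem_setOf_eq] at *
      rw [hv, ht']
    exact (level_countable hchain hwf hlevel t).mono this

theorem exists_ht_eq (hlevel : ∀ t : V, {s : V | Nonempty (↥(Set.Iio s) ≃o ↥(Set.Iio t))}.Countable) (huncount : ¬ (Set.univ : Set V).Countable) {δ : Ordinal.{u}} (hδ : δ < w1) : ∃ v : V, ht hchain hwf v = δ := by
  have : ¬ (∀ v : V, ht hchain hwf v < δ) := by
    intro h
    refine huncount (((bounded_countable hchain hwf hlevel hδ)).mono ?_)
    intro v _
    exact h v
  push_neg at this
  obtain ⟨v, hv⟩ := this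
  rcases eq_or_lt_of_le hv with he | hlt
  · exact ⟨v, he.symm⟩
  · obtain ⟨x, _, hx⟩ := exists_ht_eq_of_lt hchain hwf hlt
    exact ⟨x, hx⟩

theorem nbrSeq_exists {X : SimpleGraph V}
    (hb : ∀ ⦃x y : V⦄, x < y → ∃ x' : V, X.Adj y x' ∧ x ≤ x' ∧ x' < y)
    {u : V} (hlim : Order.IsSuccLimit (ht hchain hwf u)) :
    ∃ g : ℕ → V, (∀ k, X.Adj u (g k) ∧ g k < u) ∧ ∀ k, g k < g (k + 1) := by
  have pick : ∀ w : V, w < u → {v : V // X.Adj u v ∧ w < v ∧ v < u} := by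
    intro w hw
    have h1 : ht hchain hwf w + 1 < ht hchain hwf u := by
      rw [Ordinal.add_one_eq_succ]
      exact hlim.succ_lt (ht_lt_ht hchain hwf hw)
    have h2 := exists_ht_eq_of_lt hchain hwf h1
    set z := Classical.choose h2 with hz
    obtain ⟨hzu, hzht⟩ := Classical.choose_spec h2
    have hwz : w < z := by
      refine lt_of_ht_lt hchain hwf hw.le hzu.le ?_
      rw [hzht, Ordinal.add_one_eq_succ]
      exact Order.lt_succ _
    have h3 := hb hzu
    exact ⟨Classical.choose h3, (Classical.choose_spec h3).1,
      lt_of_lt_of_le hwz (Classical.choose_spec h3).2.1, (Classical.choose_spec h3).2.2⟩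
  have hx0 : ∃ x : V, x < u ∧ ht hchain hwf x = 0 :=
    exists_ht_eq_of_lt hchain hwf hlim.pos
  obtain ⟨x0, hx0u, -⟩ := hx0
  have hbase := hb hx0u
  let g : ℕ → {v : V // X.Adj u v ∧ v < u} := fun k => Nat.rec
    ⟨Classical.choose hbase, (Classical.choose_spec hbase).1, (Classical.choose_spec hbase).2.2⟩
    (fun _ prev => let p := pick prev.1 prev.2.2; ⟨p.1, p.2.1, p.2.2.2⟩) k
  refine ⟨fun k => (g k).1, fun k => (g k).2, fun k => ?_⟩
  exact (pick (g k).1 (g k).2.2).2.2.1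

theorem exists_ladder {X : SimpleGraph V}
    (hcount : ∀ C : Set V, IsChain (· ≤ ·) C → C.Countable)
    (hlevel : ∀ t : V, {s : V | Nonempty (↥(Set.Iio s) ≃o ↥(Set.Iio t))}.Countable)
    (huncount : ¬ (Set.univ : Set V).Countable)
    (hb : ∀ ⦃x y : V⦄, x < y → ∃ x' : V, X.Adj y x' ∧ x ≤ x' ∧ x' < y) :
    ∃ (b : ℕ → V) (P : ℕ → Set V),
      Function.Injective b ∧
      (∀ j, ¬ (P j).Countable) ∧
      (∀ j, ∀ u ∈ P j, ∀ i, i ≤ j → X.Adj u (b i)) ∧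
      (∀ j, ∀ u ∈ P j, ∀ k, u ≠ b k) := by
  classical
  have hVne : Nonempty V := by
    by_contra h
    rw [not_nonempty_iff] at h
    exact huncount Set.countable_univ
  -- a vertex of each countable height
  obtain ⟨uu, uu_spec⟩ : ∃ uu : Ordinal.{u} → V, ∀ α < w1.{u}, ht hchain hwf (uu α) = α := by
    refine ⟨fun α => if h : ∃ v : V, ht hchain hwf v = α then Classical.choose h
      else Classical.arbitrary V, fun α hα => ?_⟩
    have h : ∃ v : V, ht hchain hwf v = α := exists_ht_eq hchain hwf hlevel huncount hα
    simp only [dif_pos h]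
    exact Classical.choose_spec h
  set Lim : Set Ordinal.{u} := {α : Ordinal.{u} | α < w1 ∧ Order.IsSuccLimit α} with hLim
  -- neighbour sequences
  obtain ⟨FF, FF_spec⟩ : ∃ FF : ℕ → Ordinal.{u} → V, ∀ α ∈ Lim, ∀ k,
      X.Adj (uu α) (FF k α) ∧ FF k α < uu α ∧ FF k α < FF (k + 1) α := by
    have key : ∀ α ∈ Lim, Order.IsSuccLimit (ht hchain hwf (uu α)) := by
      intro α hα
      rw [uu_spec α hα.1]
      exact hα.2
    refine ⟨fun k α => if h : α ∈ Lim then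
      Classical.choose (nbrSeq_exists hchain hwf hb (key α h)) k
      else Classical.arbitrary V, fun α hα k => ?_⟩
    simp only [dif_pos hα]
    obtain ⟨h1, h2⟩ := Classical.choose_spec (nbrSeq_exists hchain hwf hb (key α hα))
    exact ⟨(h1 k).1, (h1 k).2, h2 k⟩
  -- the pressing-down tower
  have step_ex : ∀ (k : ℕ) (S : Set Ordinal.{u}), IsStat S → S ⊆ Lim →
      ∃ S' : Set Ordinal.{u}, (IsStat S' ∧ S' ⊆ Lim) ∧ S' ⊆ S ∧
        ∃ bk : V, ∀ α ∈ S', FF k α = bk := by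
    intro k S hS hsub
    have hreg : ∀ α ∈ S, ht hchain hwf (FF k α) < α := by
      intro α hα
      have h2 := (FF_spec α (hsub hα) k).2.1
      have := ht_lt_ht hchain hwf h2
      rwa [uu_spec α (hsub hα).1] at this
    obtain ⟨γ, hγ⟩ := fodor hS (fun α => ht hchain hwf (FF k α)) hreg
    obtain ⟨α₀, hα₀⟩ := stat_nonempty hγ
    set L : Set V := {v : V | ht hchain hwf v = γ} with hLdef
    have hLc : L.Countable := by
      have : L ⊆ {s : V | ht hchain hwf s = ht hchain hwf (FF k α₀)} := by
        intro v hv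
        simp only [hLdef, mem_setOf_eq] at hv ⊢
        rw [hv, hα₀.2]
      exact (level_countable hchain hwf hlevel (FF k α₀)).mono this
    have hLne : L.Nonempty := ⟨FF k α₀, hα₀.2⟩
    obtain ⟨f, hf⟩ := hLc.exists_eq_range hLne
    have hcover : {α | α ∈ S ∧ ht hchain hwf (FF k α) = γ} ⊆ ⋃ n, {α | FF k α = f n} := by
      intro α hα
      have : FF k α ∈ L := hα.2
      rw [hf] at this
      obtain ⟨n, hn⟩ := this
      exact Set.mem_iUnion.2 ⟨n, hn.symm⟩
    obtain ⟨n, hn⟩ := stat_pigeon hγ _ hcover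
    refine ⟨_, ⟨hn, ?_⟩, ?_, f n, ?_⟩
    · intro α hα
      exact hsub hα.1.1
    · intro α hα
      exact hα.1.1
    · intro α hα
      exact hα.2
  let tseq : ℕ → {S : Set Ordinal.{u} // IsStat S ∧ S ⊆ Lim} := fun k => Nat.rec
    ⟨Lim, by
      constructor
      · exact stat_limits
      · exact subset_rfl⟩
    (fun k prev => ⟨Classical.choose (step_ex k prev.1 prev.2.1 prev.2.2),
      (Classical.choose_spec (step_ex k prev.1 prev.2.1 prev.2.2)).1⟩) k
  set T : ℕ → Set Ordinal.{u} := fun k => (tseq k).1 with hT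
  have hTsucc : ∀ k, T (k+1) ⊆ T k ∧ ∃ bk : V, ∀ α ∈ T (k+1), FF k α = bk := fun k =>
    (Classical.choose_spec (step_ex k (tseq k).1 (tseq k).2.1 (tseq k).2.2)).2
  set bb : ℕ → V := fun k => Classical.choose (hTsucc k).2 with hbb
  have bb_spec : ∀ k, ∀ α ∈ T (k+1), FF k α = bb k := fun k =>
    Classical.choose_spec (hTsucc k).2
  have Tstat : ∀ k, IsStat (T k) := fun k => (tseq k).2.1
  have TLim : ∀ k, T k ⊆ Lim := fun k => (tseq k).2.2
  have Tmono : ∀ {i j : ℕ}, i ≤ j → T j ⊆ T i := by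
    intro i j h
    induction j with
    | zero =>
      have : i = 0 := Nat.le_zero.1 h
      subst this
      exact fun α hα => hα
    | succ j ih =>
      rcases Nat.lt_or_ge i (j+1) with h' | h'
      · exact fun α hα => ih (Nat.lt_succ_iff.1 h') ((hTsucc j).1 hα)
      · have : i = j + 1 := le_antisymm h h'
        subst this
        exact fun α hα => hα
  -- FF is strictly increasing in k on Lim
  have FFmono : ∀ α ∈ Lim, ∀ {i j : ℕ}, i < j → FF i α < FF j α := by
    intro α hα i j hij
    exact strictMono_nat_of_lt_succ (fun k => (FF_spec α hα k).2.2) hij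
  -- heights of the b's
  set ηs : Ordinal.{u} := ⨆ k, ht hchain hwf (bb k) with hηs
  have hηsw1 : ηs < w1 := sup_lt_w1 (fun k => ht_lt_w1 hchain hwf hcount (bb k))
  refine ⟨bb, fun j => uu '' {α | α ∈ T (j+1) ∧ ηs < α}, ?_, ?_, ?_, ?_⟩
  · -- injectivity of bb
    intro i j hij
    by_contra hne
    rcases Nat.lt_or_ge i j with h | h
    · obtain ⟨α, hα⟩ := stat_nonempty (Tstat (j+1))
      have hαi : α ∈ T (i+1) := Tmono (Nat.succ_le_succ h.le) hα
      have h1 : FF i α = bb i := bb_spec i α hαi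
      have h2 : FF j α = bb j := bb_spec j α hα
      have := FFmono α (TLim (j+1) hα) h
      rw [h1, h2, hij] at this
      exact lt_irrefl _ this
    · rcases Nat.lt_or_ge j i with h' | h'
      · obtain ⟨α, hα⟩ := stat_nonempty (Tstat (i+1))
        have hαj : α ∈ T (j+1) := Tmono (Nat.succ_le_succ h'.le) hα
        have h1 : FF j α = bb j := bb_spec j α hαj
        have h2 : FF i α = bb i := bb_spec i α hα
        have := FFmono α (TLim (i+1) hα) h'
        rw [h1, h2, hij] at this
        exact lt_irrefl _ this
      · exact hne (le_antisymm (Nat.le_of_lt_succ (Nat.lt_succ_of_le h)) h' ▸ rfl)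
  · -- pools uncountable
    intro j hc
    have hsrc : {α | α ∈ T (j+1) ∧ ηs < α}.Countable := by
      have : {α | α ∈ T (j+1) ∧ ηs < α} ⊆ (fun v => ht hchain hwf v) ''
          (uu '' {α | α ∈ T (j+1) ∧ ηs < α}) := by
        intro α hα
        have hαw1 : α < w1 := (TLim (j+1) hα.1).1
        exact ⟨uu α, ⟨α, hα, rfl⟩, uu_spec α hαw1⟩
      exact (Set.Countable.image hc _).mono this
    have : (T (j+1)).Countable := by
      have hsub2 : T (j+1) ⊆ {α | α ∈ T (j+1) ∧ ηs < α} ∪ (Iio (ηs + 1)) := by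
        intro α hα
        rcases le_or_gt α ηs with h | h
        · exact Or.inr (lt_of_le_of_lt h (lt_add_one _))
        · exact Or.inl ⟨hα, h⟩
      exact (hsrc.union (countable_Iio_of_lt_w1 (succ_lt_w1 hηsw1))).mono hsub2
    exact stat_not_countable (Tstat (j+1)) this
  · -- adjacency
    rintro j u ⟨α, ⟨hαT, -⟩, rfl⟩ i hij
    have hαi : α ∈ T (i+1) := Tmono (Nat.succ_le_succ hij) hαT
    have := (FF_spec α (TLim (j+1) hαT) i).1
    rwa [bb_spec i α hαi] at this
  · -- u avoids the range of bb
    rintro j u ⟨α, ⟨hαT, hαη⟩, rfl⟩ k he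
    have hαw1 : α < w1 := (TLim (j+1) hαT).1
    have h1 : ht hchain hwf (uu α) = α := uu_spec α hαw1
    have h2 : ht hchain hwf (bb k) ≤ ηs := Ordinal.le_iSup (fun k => ht hchain hwf (bb k)) k
    rw [he] at h1
    rw [h1] at h2
    exact absurd (lt_of_lt_of_le hαη h2) (lt_irrefl _)

end Tree

noncomputable def K1 : Type v := ((Cardinal.aleph 1 : Cardinal.{v}).ord).ToType

noncomputable instance : LinearOrder K1.{v} :=
  inferInstanceAs (LinearOrder ((Cardinal.aleph 1 : Cardinal.{v}).ord).ToType)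

instance : WellFoundedLT K1.{v} :=
  inferInstanceAs (WellFoundedLT ((Cardinal.aleph 1 : Cardinal.{v}).ord).ToType)

instance : IsWellOrder K1.{v} (· < ·) := isWellOrder_lt

theorem type_K1 : Ordinal.type ((· < ·) : K1.{v} → K1.{v} → Prop) =
    (Cardinal.aleph 1 : Cardinal.{v}).ord :=
  Ordinal.type_toType _

theorem mk_K1 : #K1.{v} = (Cardinal.aleph 1 : Cardinal.{v}) := by
  rw [show #K1.{v} = #((Cardinal.aleph 1 : Cardinal.{v}).ord).ToType from rfl,
    Cardinal.mk_toType, Cardinal.card_ord]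

theorem exists_inj_fun {W : Type v} {ι : Type} (hι : #ι = (Cardinal.aleph 1 : Cardinal.{0}))
    (P : ℕ → Set W) (hP : ∀ j, ¬ (P j).Countable) :
    ∃ Φ : ℕ × ℕ × ι → W, Function.Injective Φ ∧
      ∀ t : ℕ × ℕ × ι, Φ t ∈ P (max t.1 t.2.1) := by
  classical
  have htrip : #(ℕ × ℕ × ι) = (Cardinal.aleph 1 : Cardinal.{0}) := by
    rw [Cardinal.mk_prod, Cardinal.mk_prod, hι, Cardinal.mk_nat]
    simp only [Cardinal.lift_id, Cardinal.lift_aleph0]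
    have h01 : (ℵ₀ : Cardinal.{0}) ≤ Cardinal.aleph 1 := Cardinal.aleph0_lt_aleph_one.le
    rw [Cardinal.mul_eq_max le_rfl h01, max_eq_right h01,
      Cardinal.mul_eq_max le_rfl h01, max_eq_right h01]
  have hcard : #(ULift.{v} (ℕ × ℕ × ι)) = #K1.{v} := by
    rw [Cardinal.mk_uLift, htrip, (mk_K1 : #K1.{v} = _), Cardinal.lift_aleph, Ordinal.lift_one]
  have e : (ℕ × ℕ × ι) ≃ K1.{v} := Equiv.ulift.symm.trans (Classical.choice (Cardinal.eq.1 hcard))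
  set jj : K1.{v} → ℕ := fun x => max (e.symm x).1 (e.symm x).2.1 with hjj
  have nonemp : ∀ (x : K1.{v}) (prev : ∀ y : K1.{v}, y < x → W),
      (P (jj x) \ Set.range (fun p : {y : K1.{v} // y < x} => prev p.1 p.2)).Nonempty := by
    intro x prev
    by_contra hemp
    rw [Set.not_nonempty_iff_eq_empty, Set.diff_eq_empty] at hemp
    have h1 : #{y : K1.{v} // y < x} < Cardinal.aleph 1 := by
      have heq := Ordinal.card_typein (r := ((· < ·) : K1.{v} → K1.{v} → Prop)) x
      have h2 : Ordinal.typein ((· < ·) : K1.{v} → K1.{v} → Prop) x < (Cardinal.aleph 1 : Cardinal.{v}).ord := by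
        have := Ordinal.typein_lt_type ((· < ·) : K1.{v} → K1.{v} → Prop) x
        rwa [type_K1] at this
      rw [Cardinal.lt_ord] at h2
      rw [heq] at h2
      exact h2
    have h3 : #(P (jj x)) < Cardinal.aleph 1 :=
      lt_of_le_of_lt (le_trans (Cardinal.mk_le_mk_of_subset hemp) (Cardinal.mk_range_le)) h1
    exact hP (jj x) (Cardinal.countable_iff_lt_aleph_one _ |>.2 h3)
  have wf : WellFounded ((· < ·) : K1.{v} → K1.{v} → Prop) := (inferInstance : WellFoundedLT K1.{v}).wf
  set G : K1.{v} → W := WellFounded.fix wf (fun x ih => (nonemp x ih).some) with hG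
  have Gspec : ∀ x : K1.{v}, G x ∈ P (jj x) ∧ ∀ y : K1.{v}, y < x → G x ≠ G y := by
    intro x
    have hfix : G x = (nonemp x (fun y _ => G y)).some := by
      rw [hG]
      exact WellFounded.fix_eq wf _ x
    have hmem := (nonemp x (fun y _ => G y)).some_mem
    rw [← hfix] at hmem
    refine ⟨hmem.1, fun y hy he => hmem.2 ⟨⟨y, hy⟩, he.symm⟩⟩
  have Ginj : Function.Injective G := by
    intro x y hxy
    rcases lt_trichotomy x y with h | h | h
    · exact absurd hxy.symm ((Gspec y).2 x h)
    · exact h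
    · exact absurd hxy ((Gspec x).2 y h)
  refine ⟨fun t => G (e t), fun a b hab => e.injective (Ginj hab), fun t => ?_⟩
  have := (Gspec (e t)).1
  simp only [hjj, Equiv.symm_apply_apply] at this
  exact this

end ATProof

/-- Every Aronszajn-tree graph contains a fat `TK_ℵ0`. -/
theorem stmt9 {V : Type u} [PartialOrder V] (X : SimpleGraph V) (hX : IsATGraph X) :
    HasFatTKAleph0 X := by
  classical
  obtain ⟨hA, hcomp, hb⟩ := hX
  obtain ⟨hroot, hchain, hwf, huncount, hcount, hlevel⟩ := hA
  obtain ⟨b, P, hbinj, hPunc, hPadj, hPnotb⟩ :=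
    ATProof.exists_ladder hchain hwf hcount hlevel huncount hb
  set Idx := (Cardinal.aleph 1 : Cardinal.{0}).out with hIdx
  have hIdxcard : Cardinal.mk Idx = Cardinal.aleph 1 := Cardinal.mk_out _
  obtain ⟨Φ, hΦinj, hΦmem⟩ := ATProof.exists_inj_fun (W := V) hIdxcard P hPunc
  have hmem : ∀ (i j : ℕ), i < j → ∀ α : Idx, Φ (i, j, α) ∈ P j := by
    intro i j hij α
    have := hΦmem (i, j, α)
    simpa [max_eq_right hij.le] using this
  have hadj1 : ∀ (i j : ℕ) (hij : i < j) (α : Idx), X.Adj (b i) (Φ (i, j, α)) :=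
    fun i j hij α => (hPadj j _ (hmem i j hij α) i hij.le).symm
  have hadj2 : ∀ (i j : ℕ) (hij : i < j) (α : Idx), X.Adj (Φ (i, j, α)) (b j) :=
    fun i j hij α => hPadj j _ (hmem i j hij α) j le_rfl
  have hnotb : ∀ (i j : ℕ) (hij : i < j) (α : Idx) (k : ℕ), Φ (i, j, α) ≠ b k :=
    fun i j hij α k => hPnotb j _ (hmem i j hij α) k
  have hsupp : ∀ (i j : ℕ) (hij : i < j) (α : Idx),
      (SimpleGraph.Walk.cons (hadj1 i j hij α)
        (SimpleGraph.Walk.cons (hadj2 i j hij α) SimpleGraph.Walk.nil)).support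
        = [b i, Φ (i, j, α), b j] := by
    intro i j hij α
    simp [SimpleGraph.Walk.support_cons]
  refine ⟨⟨b, hbinj, Idx, hIdxcard,
    fun i j hij α => SimpleGraph.Walk.cons (hadj1 i j hij α)
      (SimpleGraph.Walk.cons (hadj2 i j hij α) SimpleGraph.Walk.nil), ?_, ?_, ?_, ?_⟩⟩
  · -- isPath
    intro i j hij α
    rw [SimpleGraph.Walk.isPath_def, hsupp i j hij α]
    refine List.nodup_cons.2 ⟨?_, List.nodup_cons.2 ⟨?_, List.nodup_singleton _⟩⟩
    · intro hmem'
      rcases List.mem_cons.1 hmem' with he | he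
      · exact hnotb i j hij α i he.symm
      · rcases List.mem_singleton.1 he with he'
        exact hbinj.ne hij.ne he'
    · intro hmem'
      rcases List.mem_singleton.1 hmem' with he
      exact hnotb i j hij α j he
  · -- branch_not_internal
    intro i j hij α k hk
    rw [hsupp i j hij α] at hk
    rcases List.mem_cons.1 hk with he | he
    · exact Or.inl (hbinj he)
    rcases List.mem_cons.1 he with he' | he'
    · exact absurd he'.symm (hnotb i j hij α k)
    · exact Or.inr (hbinj (List.mem_singleton.1 he'))
  · -- internally_disjoint
    intro i j hij α i' j' hij' α' hne w hw hw'
    rw [hsupp i j hij α] at hw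
    rw [hsupp i' j' hij' α'] at hw'
    have hΦne : Φ (i, j, α) ≠ Φ (i', j', α') := fun he => hne (hΦinj he)
    have hw2 : w = b i ∨ w = Φ (i, j, α) ∨ w = b j := by
      rcases List.mem_cons.1 hw with he | he
      · exact Or.inl he
      rcases List.mem_cons.1 he with he' | he'
      · exact Or.inr (Or.inl he')
      · exact Or.inr (Or.inr (List.mem_singleton.1 he'))
    have hw2' : w = b i' ∨ w = Φ (i', j', α') ∨ w = b j' := by
      rcases List.mem_cons.1 hw' with he | he
      · exact Or.inl he
      rcases List.mem_cons.1 he with he' | he'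
      · exact Or.inr (Or.inl he')
      · exact Or.inr (Or.inr (List.mem_singleton.1 he'))
    have hwmid : w ≠ Φ (i, j, α) := by
      intro he
      rcases hw2' with he' | he' | he'
      · exact hnotb i j hij α i' (he.symm.trans he')
      · exact hΦne (he.symm.trans he')
      · exact hnotb i j hij α j' (he.symm.trans he')
    have hwmid' : w ≠ Φ (i', j', α') := by
      intro he
      rcases hw2 with he' | he' | he'
      · exact hnotb i' j' hij' α' i (he.symm.trans he')
      · exact hΦne (he'.symm.trans he)
      · exact hnotb i' j' hij' α' j (he.symm.trans he')
    constructor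
    · rcases hw2 with he | he | he
      · exact Or.inl he
      · exact absurd he hwmid
      · exact Or.inr he
    · rcases hw2' with he | he | he
      · exact Or.inl he
      · exact absurd he hwmid'
      · exact Or.inr he
  · -- path_ne
    intro i j hij α α' hne hpe
    have := congrArg SimpleGraph.Walk.support hpe
    rw [hsupp i j hij α, hsupp i j hij α'] at this
    have hΦ : Φ (i, j, α) = Φ (i, j, α') := by
      rw [List.cons.injEq, List.cons.injEq] at this
      exact this.2.1
    have := hΦinj hΦ
    rw [Prod.mk.injEq, Prod.mk.injEq] at this
    exact hne this.2.2
end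

section
/- Every graph H that is an IX for some Aronszajn-tree graph X contains a fat TK_ℵ0 as a subgraph. -/
universe u v

open Classical Set SimpleGraph

namespace FatAux

variable {W : Type*} {G : SimpleGraph W}

lemma internal_vertex {a b : W} (p : G.Walk a b) (hp : p.IsPath) (hl : 2 ≤ p.length) :
    ∃ v ∈ p.support, v ≠ a ∧ v ≠ b := by
  match p with
  | .nil => simp at hl
  | .cons h .nil => simp at hl
  | .cons (v := c) h (.cons h' q) =>
    refine ⟨c, by simp, h.ne', ?_⟩
    intro hcb
    have hnd := hp.support_nodup
    rw [SimpleGraph.Walk.support_cons, SimpleGraph.Walk.support_cons] at hnd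
    have hbq : b ∈ q.support := SimpleGraph.Walk.end_mem_support q
    have hcq : c ∉ q.support := (List.nodup_cons.mp (List.nodup_cons.mp hnd).2).1
    exact hcq (hcb ▸ hbq)

lemma edges_of_length_one {a b : W} (p : G.Walk a b) (h : p.length = 1) :
    p.edges = [s(a, b)] := by
  match p with
  | .nil => simp at h
  | .cons (v := c) hadj q =>
    have hq : q.length = 0 := by simpa using h
    have hcb : c = b := SimpleGraph.Walk.eq_of_length_eq_zero hq
    subst hcb
    have : q = SimpleGraph.Walk.nil := by
      rwa [SimpleGraph.Walk.length_eq_zero_iff, SimpleGraph.Walk.nil_iff_eq_nil] at hq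
    subst this
    simp

/-- All vertices from which some vertex of `M` can be reached by a short walk inside `A`. -/
def reachSet (G : SimpleGraph W) (A : Set W) (v : W) (n : ℕ) : Set W :=
  {u | ∃ p : G.Walk v u, p.length ≤ n ∧ ∀ x ∈ p.support, x ∈ A}

/-- The `ℵ₁`-star lemma: in any graph, if uncountably many marked vertices are reachable
from a single vertex by walks inside `A`, then there is a vertex `w₀ ∈ A` together with an
uncountable internally disjoint fan of paths inside `A` from `w₀` to marked vertices. -/
theorem star_lemma (G : SimpleGraph W) (A M : Set W) (hM : ¬ M.Countable) (hMA : M ⊆ A)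
    (b : W) (hreach : ∀ u ∈ M, ∃ p : G.Walk b u, ∀ v ∈ p.support, v ∈ A) :
    ∃ (w₀ : W), w₀ ∈ A ∧ ∃ N : Set W, N ⊆ M ∧ ¬ N.Countable ∧ w₀ ∉ N ∧
      ∃ P : ∀ u ∈ N, G.Walk w₀ u,
        (∀ u hu, (P u hu).IsPath) ∧
        (∀ u hu v, v ∈ (P u hu).support → v ∈ A) ∧
        (∀ u hu u' hu', u ≠ u' → ∀ v, v ∈ (P u hu).support → v ∈ (P u' hu').support →
          v = w₀) := by
  classical
  -- `b` is in `A`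
  have hMne : M.Nonempty := by
    rcases M.eq_empty_or_nonempty with h | h
    · exact absurd (h ▸ countable_empty) hM
    · exact h
  have hbA : b ∈ A := by
    obtain ⟨u, hu⟩ := hMne
    obtain ⟨p, hp⟩ := hreach u hu
    exact hp b p.start_mem_support
  -- some ball around b catches uncountably many of M
  have hex : ∃ n, ∃ v, v ∈ A ∧ ¬ (M ∩ reachSet G A v n).Countable := by
    by_contra hcon
    push_neg at hcon
    apply hM
    have hsub : M ⊆ ⋃ n, M ∩ reachSet G A b n := by
      intro u hu
      obtain ⟨p, hp⟩ := hreach u hu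
      exact mem_iUnion.2 ⟨p.length, hu, ⟨p, le_rfl, hp⟩⟩
    exact (countable_iUnion fun n => hcon n b hbA).mono hsub
  -- minimal radius
  let n₀ := Nat.find hex
  obtain ⟨w₀, hw₀A, hbig⟩ : ∃ v, v ∈ A ∧ ¬ (M ∩ reachSet G A v n₀).Countable :=
    Nat.find_spec hex
  have hn₀ : n₀ ≠ 0 := by
    intro h0
    apply hbig
    have : M ∩ reachSet G A w₀ n₀ ⊆ {w₀} := by
      intro u hu
      obtain ⟨-, p, hlen, -⟩ := hu
      rw [h0, Nat.le_zero] at hlen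
      exact (SimpleGraph.Walk.eq_of_length_eq_zero hlen).symm
    exact (countable_singleton w₀).mono this
  have hmin : ∀ v ∈ A, (M ∩ reachSet G A v (n₀ - 1)).Countable := by
    intro v hv
    by_contra hc
    exact Nat.find_min hex (Nat.sub_lt (Nat.pos_of_ne_zero hn₀) one_pos) ⟨v, hv, hc⟩
  -- blocking lemma
  have block : ∀ Z : Set W, Z.Countable → w₀ ∉ Z →
      ¬ ({u | u ∈ M ∧ ∃ p : G.Walk w₀ u, p.length ≤ n₀ ∧
            ∀ x ∈ p.support, x ∈ A \ Z}).Countable := by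
    intro Z hZc hw₀Z hgood
    apply hbig
    have hsub : M ∩ reachSet G A w₀ n₀ ⊆
        {u | u ∈ M ∧ ∃ p : G.Walk w₀ u, p.length ≤ n₀ ∧ ∀ x ∈ p.support, x ∈ A \ Z} ∪
        ⋃ z ∈ Z ∩ A, M ∩ reachSet G A z (n₀ - 1) := by
      rintro u ⟨huM, p, hlen, hpA⟩
      by_cases hz : ∀ x ∈ p.support, x ∉ Z
      · exact Or.inl ⟨huM, p, hlen, fun x hx => ⟨hpA x hx, hz x hx⟩⟩
      · push_neg at hz
        obtain ⟨z, hzs, hzZ⟩ := hz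
        have hzw₀ : w₀ ≠ z := fun h => hw₀Z (h ▸ hzZ)
        refine Or.inr (mem_biUnion ⟨hzZ, hpA z hzs⟩ ⟨huM, p.dropUntil z hzs, ?_, ?_⟩)
        · have hspec := SimpleGraph.Walk.take_spec p hzs
          have hlen2 : (p.takeUntil z hzs).length + (p.dropUntil z hzs).length = p.length := by
            rw [← SimpleGraph.Walk.length_append, hspec]
          have htake : (p.takeUntil z hzs).length ≠ 0 := by
            intro h
            exact hzw₀ (SimpleGraph.Walk.eq_of_length_eq_zero h)
          omega
        · intro x hx
          exact hpA x (SimpleGraph.Walk.support_dropUntil_subset p hzs hx)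
    exact (hgood.union ((hZc.mono inter_subset_left).biUnion
      (fun z hz => hmin z hz.2))).mono hsub
  -- Zorn: a maximal internally disjoint fan
  let S := Σ u : W, G.Walk w₀ u
  let valid : S → Prop := fun e =>
    e.1 ∈ M ∧ e.1 ≠ w₀ ∧ e.2.IsPath ∧ ∀ x ∈ e.2.support, x ∈ A
  let famOK : Set S → Prop := fun F =>
    (∀ e ∈ F, valid e) ∧ ∀ e ∈ F, ∀ e' ∈ F, e ≠ e' →
      e.1 ≠ e'.1 ∧ ∀ v, v ∈ e.2.support → v ∈ e'.2.support → v = w₀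
  obtain ⟨F, hFmax⟩ : ∃ F, Maximal (· ∈ {F | famOK F}) F := by
    apply zorn_subset
    intro c hc hchain
    refine ⟨⋃₀ c, ⟨?_, ?_⟩, fun s hs => subset_sUnion_of_mem hs⟩
    · rintro e ⟨F, hF, heF⟩
      exact (hc hF).1 e heF
    · rintro e ⟨F, hF, heF⟩ e' ⟨F', hF', heF'⟩ hne
      rcases hchain.total hF hF' with h | h
      · exact (hc hF').2 e (h heF) e' heF' hne
      · exact (hc hF).2 e heF e' (h heF') hne
  have hFbig : ¬ F.Countable := by
    intro hFc
    set Z : Set W := (⋃ e ∈ F, {x | x ∈ e.2.support}) \ {w₀} with hZdef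
    have hZc : Z.Countable :=
      ((hFc.biUnion (fun e _ => (e.2.support.finite_toSet).countable)).mono diff_subset)
    have hw₀Z : w₀ ∉ Z := fun h => h.2 rfl
    have hgood := block Z hZc hw₀Z
    obtain ⟨u, hu, huZ⟩ : ∃ u, (u ∈ M ∧ ∃ p : G.Walk w₀ u, p.length ≤ n₀ ∧
        ∀ x ∈ p.support, x ∈ A \ Z) ∧ u ∉ Z ∪ {w₀} := by
      by_contra hcon
      push_neg at hcon
      exact hgood ((hZc.union (countable_singleton w₀)).mono fun u hu => hcon u hu)
    obtain ⟨huM, p, hplen, hpA⟩ := hu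
    have huw₀ : u ≠ w₀ := fun h => huZ (Or.inr h)
    have huZ' : u ∉ Z := fun h => huZ (Or.inl h)
    let e₀ : S := ⟨u, p.bypass⟩
    have he₀sup : ∀ x ∈ p.bypass.support, x ∈ A \ Z :=
      fun x hx => hpA x (SimpleGraph.Walk.support_bypass_subset p hx)
    have hmarker : ∀ e ∈ F, e.1 ∈ Z := by
      intro e heF
      have he1 : e.1 ∈ e.2.support := SimpleGraph.Walk.end_mem_support e.2
      have hne : e.1 ≠ w₀ := ((hFmax.1.1 e heF).2.1)
      exact ⟨mem_biUnion heF he1, fun h => hne h⟩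
    have he₀F : e₀ ∉ F := fun h => huZ' (hmarker e₀ h)
    have hcompat : ∀ e ∈ F, e₀.1 ≠ e.1 ∧
        ∀ v, v ∈ e₀.2.support → v ∈ e.2.support → v = w₀ := by
      intro e heF
      constructor
      · intro h
        have : e₀.1 ∈ Z := by rw [h]; exact hmarker e heF
        exact huZ' this
      · intro v hv hv'
        have hvZ : v ∉ Z := (he₀sup v hv).2
        by_contra hvw₀
        exact hvZ ⟨mem_biUnion heF hv', fun h => hvw₀ h⟩
    have hins : famOK (insert e₀ F) := by
      constructor
      · rintro e (rfl | heF)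
        · exact ⟨huM, huw₀, p.bypass_isPath, fun x hx => (he₀sup x hx).1⟩
        · exact hFmax.1.1 e heF
      · rintro e (rfl | heF) e' (rfl | heF') hne
        · exact absurd rfl hne
        · exact hcompat e' heF'
        · obtain ⟨h1, h2⟩ := hcompat e heF
          exact ⟨h1.symm, fun v hv hv' => h2 v hv' hv⟩
        · exact hFmax.1.2 e heF e' heF' hne
    have := hFmax.2 hins (subset_insert e₀ F) (mem_insert e₀ F)
    exact he₀F this
  -- extract the fan
  have hinj : InjOn Sigma.fst F := by
    intro e he e' he' h
    by_contra hne
    exact (hFmax.1.2 e he e' he' hne).1 h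
  refine ⟨w₀, hw₀A, Sigma.fst '' F, ?_, ?_, ?_, ?_⟩
  · rintro u ⟨e, heF, rfl⟩
    exact (hFmax.1.1 e heF).1
  · intro hNc
    exact hFbig ((mapsTo_image Sigma.fst F).countable_of_injOn hinj hNc)
  · rintro ⟨e, heF, h⟩
    exact (hFmax.1.1 e heF).2.1 h
  · have hpick : ∀ u (hu : u ∈ Sigma.fst '' F), ∃ e, e ∈ F ∧ e.1 = u := by
      rintro u ⟨e, heF, rfl⟩; exact ⟨e, heF, rfl⟩
    refine ⟨fun u hu => ((hpick u hu).choose.2).copy rfl (hpick u hu).choose_spec.2, ?_, ?_, ?_⟩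
    · intro u hu
      rw [SimpleGraph.Walk.isPath_copy]
      exact (hFmax.1.1 _ (hpick u hu).choose_spec.1).2.2.1
    · intro u hu v hv
      rw [SimpleGraph.Walk.support_copy] at hv
      exact (hFmax.1.1 _ (hpick u hu).choose_spec.1).2.2.2 v hv
    · intro u hu u' hu' hne v hv hv'
      rw [SimpleGraph.Walk.support_copy] at hv hv'
      have hee' : (hpick u hu).choose ≠ (hpick u' hu').choose := by
        intro h
        apply hne
        rw [← (hpick u hu).choose_spec.2, ← (hpick u' hu').choose_spec.2, h]
      exact (hFmax.1.2 _ (hpick u hu).choose_spec.1 _ (hpick u' hu').choose_spec.1 hee').2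
        v hv hv'




/-- A cover (immediate successor) in a partial order. -/
def IsCover {V : Type u} [PartialOrder V] (b s : V) : Prop :=
  b < s ∧ ∀ z, ¬ (b < z ∧ z < s)

/-- All the data of an inflated Aronszajn-tree graph needed for the construction. -/
structure Ctx {W : Type v} {V : Type u} [PartialOrder V]
    (H : SimpleGraph W) (X : SimpleGraph V) where
  Vx : V → Set W
  uniq : ∀ w : W, ∃! x : V, w ∈ Vx x
  conn : ∀ x : V, (H.induce (Vx x)).Connected
  adj_iff : ∀ x y : V, x ≠ y → (X.Adj x y ↔ ∃ a ∈ Vx x, ∃ b ∈ Vx y, H.Adj a b)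
  r : V
  r_le : ∀ t : V, r ≤ t
  chain : ∀ t : V, IsChain (· ≤ ·) (Set.Iic t)
  wf : ∀ t : V, (Set.Iic t).WellFoundedOn (· < ·)
  uncnt : ¬ (Set.univ : Set V).Countable
  lev : ∀ t : V, {s : V | Nonempty (↥(Set.Iio s) ≃o ↥(Set.Iio t))}.Countable
  cof : ∀ ⦃x y : V⦄, x < y → ∃ x' : V, X.Adj y x' ∧ x ≤ x' ∧ x' < y

namespace Ctx

variable {W : Type v} {V : Type u} [PartialOrder V]
  {H : SimpleGraph W} {X : SimpleGraph V} (c : Ctx H X)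

/-- The branch set a vertex of `H` belongs to. -/
noncomputable def pi (w : W) : V := (c.uniq w).choose

lemma mem_pi (w : W) : w ∈ c.Vx (c.pi w) := (c.uniq w).choose_spec.1

lemma pi_eq {w : W} {t : V} (h : w ∈ c.Vx t) : c.pi w = t :=
  ((c.uniq w).choose_spec.2 t h).symm

/-- A distinguished vertex in each branch set. -/
noncomputable def mhat (t : V) : W := ((c.conn t).nonempty.some : ↥(c.Vx t)).1

lemma mhat_mem (t : V) : c.mhat t ∈ c.Vx t := ((c.conn t).nonempty.some : ↥(c.Vx t)).2

lemma pi_mhat (t : V) : c.pi (c.mhat t) = t := c.pi_eq (c.mhat_mem t)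

lemma mhat_inj : Function.Injective c.mhat := by
  intro t t' h
  have := c.pi_eq (c.mhat_mem t)
  rw [h, c.pi_mhat t'] at this
  exact this.symm

lemma Iio_eq_of_cover (c : Ctx H X) {b s : V} (hc : IsCover b s) : Set.Iio s = Set.Iic b := by
  ext x
  constructor
  · intro hx
    by_cases hxb : x = b
    · exact hxb.le
    rcases c.chain s (le_of_lt (hx : x < s)) hc.1.le hxb with h | h
    · exact h
    · rcases lt_or_eq_of_le h with h' | h'
      · exact absurd ⟨h', hx⟩ (hc.2 x)
      · exact h'.ge
  · intro hx
    exact lt_of_le_of_lt hx hc.1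

lemma covers_countable (c : Ctx H X) (b : V) : {s : V | IsCover b s}.Countable := by
  rcases Set.eq_empty_or_nonempty {s : V | IsCover b s} with h | ⟨s₀, hs₀⟩
  · simp [h]
  refine (c.lev s₀).mono ?_
  intro s hs
  have h1 : Set.Iio s = Set.Iio s₀ := by
    rw [c.Iio_eq_of_cover hs, c.Iio_eq_of_cover hs₀]
  exact ⟨OrderIso.setCongr _ _ h1⟩

lemma walk_in (t : V) {a b : W} (ha : a ∈ c.Vx t) (hb : b ∈ c.Vx t) :
    ∃ p : H.Walk a b, ∀ v ∈ p.support, v ∈ c.Vx t := by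
  have hreach : (H.induce (c.Vx t)).Reachable ⟨a, ha⟩ ⟨b, hb⟩ := (c.conn t) _ _
  obtain ⟨q⟩ := hreach
  refine ⟨q.map (SimpleGraph.Embedding.induce (c.Vx t)).toHom, ?_⟩
  intro v hv
  replace hv : v ∈ List.map (SimpleGraph.Embedding.induce (G := H) (c.Vx t)).toHom q.support := by
    rw [← SimpleGraph.Walk.support_map]; exact hv
  rw [List.mem_map] at hv
  obtain ⟨x, -, rfl⟩ := hv
  exact x.2

/-- Two branch sets are linked by a walk avoiding the branch sets indexed by `bads`. -/
def Linked (bads : Set V) (t s : V) : Prop :=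
  ∃ a ∈ c.Vx t, ∃ d ∈ c.Vx s, ∃ p : H.Walk a d, ∀ v ∈ p.support, c.pi v ∉ bads

lemma linked_refl {bads : Set V} {t : V} (ht : t ∉ bads) : c.Linked bads t t := by
  refine ⟨c.mhat t, c.mhat_mem t, c.mhat t, c.mhat_mem t, SimpleGraph.Walk.nil, ?_⟩
  intro v hv
  rw [SimpleGraph.Walk.support_nil, List.mem_singleton] at hv
  rw [hv, c.pi_mhat]
  exact ht

lemma linked_step {bads : Set V} {t s : V} (ht : t ∉ bads) (hs : s ∉ bads)
    (hadj : X.Adj t s) : c.Linked bads t s := by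
  obtain ⟨a, ha, b, hb, hab⟩ := (c.adj_iff t s hadj.ne).mp hadj
  refine ⟨a, ha, b, hb, SimpleGraph.Walk.cons hab SimpleGraph.Walk.nil, ?_⟩
  intro v hv
  simp only [SimpleGraph.Walk.support_cons, SimpleGraph.Walk.support_nil,
    List.mem_cons, List.mem_singleton] at hv
  rcases hv with rfl | rfl | h
  · rw [c.pi_eq ha]; exact ht
  · rw [c.pi_eq hb]; exact hs
  · exact absurd h (by simp)

lemma linked_trans {bads : Set V} {t u s : V} (h1 : c.Linked bads t u)
    (h2 : c.Linked bads u s) (hu : u ∉ bads) : c.Linked bads t s := by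
  obtain ⟨a, ha, d1, hd1, p1, hp1⟩ := h1
  obtain ⟨a2, ha2, d2, hd2, p2, hp2⟩ := h2
  obtain ⟨q, hq⟩ := c.walk_in u hd1 ha2
  refine ⟨a, ha, d2, hd2, p1.append (q.append p2), ?_⟩
  intro v hv
  rw [SimpleGraph.Walk.mem_support_append_iff] at hv
  rcases hv with hv | hv
  · exact hp1 v hv
  rw [SimpleGraph.Walk.mem_support_append_iff] at hv
  rcases hv with hv | hv
  · rw [c.pi_eq (hq v hv)]; exact hu
  · exact hp2 v hv

lemma descend (bads : Set V) (hfin : bads.Finite) :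
    ∀ y : V, y ∉ bads → ∃ s : V, s ∉ bads ∧ (s = c.r ∨ ∃ b ∈ bads, IsCover b s) ∧
      c.Linked bads y s := by
  intro y
  have hwf : WellFounded (fun a b : ↥(Set.Iic y) => (a : V) < b) := c.wf y
  have main : ∀ z : ↥(Set.Iic y), (z : V) ∉ bads → ∃ s : V, s ∉ bads ∧
      (s = c.r ∨ ∃ b ∈ bads, IsCover b s) ∧ c.Linked bads (z : V) s := by
    intro z
    induction z using hwf.induction with
    | _ z IH =>
      intro hz
      by_cases hzr : (z : V) = c.r
      · exact ⟨z, hz, Or.inl hzr, c.linked_refl hz⟩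
      have hrz : c.r < (z : V) := lt_of_le_of_ne (c.r_le z) (Ne.symm hzr)
      by_cases hdown : ∃ z' : V, X.Adj (z : V) z' ∧ z' < (z : V) ∧ z' ∉ bads
      · obtain ⟨z', hadj, hlt, hnb⟩ := hdown
        have hz'y : z' ∈ Set.Iic y := le_trans hlt.le z.2
        obtain ⟨s, h1, h2, hlink⟩ := IH ⟨z', hz'y⟩ hlt hnb
        exact ⟨s, h1, h2, c.linked_trans (c.linked_step hz hnb hadj) hlink hnb⟩
      push_neg at hdown
      -- all down-neighbours of z are bad
      obtain ⟨x', hx'adj, -, hx'lt⟩ := c.cof hrz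
      have hx'bad : x' ∈ bads := hdown x' hx'adj hx'lt
      set B : Set V := {b | b ∈ bads ∧ b < (z : V)} with hBdef
      have hBfin : B.Finite := hfin.subset fun b hb => hb.1
      have hBne : B.Nonempty := ⟨x', hx'bad, hx'lt⟩
      obtain ⟨bm, hbmB, hbmmax⟩ := hBfin.exists_maximal hBne
      have hgreatest : ∀ b' ∈ B, b' ≤ bm := by
        intro b' hb'
        by_cases hbb : b' = bm
        · exact hbb.le
        rcases c.chain (z : V) (hb'.2.le) (hbmB.2.le) hbb with h | h
        · exact h
        · exact hbmmax hb' h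
      have hcover : IsCover bm (z : V) := by
        refine ⟨hbmB.2, ?_⟩
        rintro z' ⟨h1, h2⟩
        obtain ⟨x'', hadj'', hle'', hlt''⟩ := c.cof h2
        have : x'' ∈ B := ⟨hdown x'' hadj'' hlt'', hlt''⟩
        exact absurd (hgreatest x'' this) (lt_of_lt_of_le h1 hle'').not_ge
      exact ⟨z, hz, Or.inr ⟨bm, hbmB.1, hcover⟩, c.linked_refl hz⟩
  intro hy
  exact main ⟨y, le_refl y⟩ hy

lemma stop_countable (bads : Set V) (hfin : bads.Finite) :
    {s : V | s = c.r ∨ ∃ b ∈ bads, IsCover b s}.Countable := by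
  have : {s : V | s = c.r ∨ ∃ b ∈ bads, IsCover b s} ⊆
      {c.r} ∪ ⋃ b ∈ bads, {s | IsCover b s} := by
    rintro s (rfl | ⟨b, hb, hc⟩)
    · exact Or.inl rfl
    · exact Or.inr (mem_biUnion hb hc)
  exact ((countable_singleton c.r).union
    (hfin.countable.biUnion fun b _ => c.covers_countable b)).mono this

lemma concentrate (bads : Set V) (hfin : bads.Finite) (S : Set V) (hS : ¬ S.Countable) :
    ∃ s₀ : V, s₀ ∉ bads ∧ ∃ S' : Set V, S' ⊆ S ∧ ¬ S'.Countable ∧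
      ∀ t ∈ S', t ∉ bads ∧ c.Linked bads t s₀ := by
  set S₁ := S \ bads with hS₁def
  have hS₁ : ¬ S₁.Countable := by
    intro h
    exact hS ((h.union hfin.countable).mono fun t ht => by
      by_cases hb : t ∈ bads
      · exact Or.inr hb
      · exact Or.inl ⟨ht, hb⟩)
  have hpick : ∀ t ∈ S₁, ∃ s : V, s ∉ bads ∧ (s = c.r ∨ ∃ b ∈ bads, IsCover b s) ∧
      c.Linked bads t s := fun t ht => c.descend bads hfin t ht.2
  classical
  set g : V → V := fun t => if h : t ∈ S₁ then (hpick t h).choose else c.r with hgdef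
  have hsub : S₁ ⊆ ⋃ s ∈ {s : V | s = c.r ∨ ∃ b ∈ bads, IsCover b s}, {t ∈ S₁ | g t = s} := by
    intro t ht
    refine mem_biUnion ?_ ⟨ht, rfl⟩
    have := (hpick t ht).choose_spec
    simp only [hgdef, dif_pos ht]
    exact this.2.1
  have hfiber : ∃ s₀, ¬ {t ∈ S₁ | g t = s₀}.Countable := by
    by_contra hcon
    push_neg at hcon
    exact hS₁ (((c.stop_countable bads hfin).biUnion fun s _ => hcon s).mono hsub)
  obtain ⟨s₀, hs₀⟩ := hfiber
  have hne : {t ∈ S₁ | g t = s₀}.Nonempty := by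
    rcases Set.eq_empty_or_nonempty {t ∈ S₁ | g t = s₀} with h | h
    · exact absurd (h ▸ countable_empty) hs₀
    · exact h
  obtain ⟨t₀, ht₀⟩ := hne
  have hs₀spec : s₀ ∉ bads := by
    have := (hpick t₀ ht₀.1).choose_spec
    have hg : g t₀ = (hpick t₀ ht₀.1).choose := by simp only [hgdef, dif_pos ht₀.1]
    rw [← ht₀.2, hg]
    exact this.1
  refine ⟨s₀, hs₀spec, {t ∈ S₁ | g t = s₀}, fun t ht => ht.1.1, hs₀, ?_⟩
  rintro t ⟨ht₁, htg⟩
  have := (hpick t ht₁).choose_spec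
  have hg : g t = (hpick t ht₁).choose := by simp only [hgdef, dif_pos ht₁]
  refine ⟨ht₁.2, ?_⟩
  rw [← htg, hg]
  exact this.2.2


/-- One level of the construction: a fresh centre `w₀` avoiding the finitely many
previously used branch sets, together with an uncountable internally disjoint fan of
paths from `w₀` to the distinguished vertices of an uncountable subfamily of `S`. -/
lemma step (bads : Set V) (hfin : bads.Finite) (S : Set V) (hS : ¬ S.Countable) :
    ∃ (w₀ : W) (M : Set V) (Q : ∀ t ∈ M, H.Walk w₀ (c.mhat t)),
      c.pi w₀ ∉ bads ∧ M ⊆ S ∧ ¬ M.Countable ∧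
      (∀ t ∈ M, t ∉ bads) ∧ (∀ t (ht : t ∈ M), c.mhat t ≠ w₀) ∧
      (∀ t (ht : t ∈ M), (Q t ht).IsPath) ∧
      (∀ t (ht : t ∈ M) v, v ∈ (Q t ht).support → c.pi v ∉ bads) ∧
      (∀ t (ht : t ∈ M) t' (ht' : t' ∈ M), t ≠ t' →
        ∀ v, v ∈ (Q t ht).support → v ∈ (Q t' ht').support → v = w₀) := by
  classical
  obtain ⟨s₀, hs₀, S', hS'S, hS'c, hS'⟩ := c.concentrate bads hfin S hS
  set A : Set W := {v : W | c.pi v ∉ bads} with hAdef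
  have hVxA : ∀ {t : V}, t ∉ bads → c.Vx t ⊆ A := by
    intro t ht v hv
    have : c.pi v = t := c.pi_eq hv
    simpa [hAdef, this]
  set MW : Set W := c.mhat '' S' with hMWdef
  have hMWc : ¬ MW.Countable := by
    intro h
    apply hS'c
    exact (h.preimage c.mhat_inj).mono (subset_preimage_image c.mhat S')
  have hMWA : MW ⊆ A := by
    rintro u ⟨t, ht, rfl⟩
    exact hVxA (hS' t ht).1 (c.mhat_mem t)
  have hreach : ∀ u ∈ MW, ∃ p : H.Walk (c.mhat s₀) u, ∀ v ∈ p.support, v ∈ A := by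
    rintro u ⟨t, ht, rfl⟩
    obtain ⟨a, ha, d, hd, p, hp⟩ := (hS' t ht).2
    obtain ⟨q1, hq1⟩ := c.walk_in s₀ (c.mhat_mem s₀) hd
    obtain ⟨q2, hq2⟩ := c.walk_in t ha (c.mhat_mem t)
    refine ⟨q1.append (p.reverse.append q2), ?_⟩
    intro v hv
    rw [SimpleGraph.Walk.mem_support_append_iff] at hv
    rcases hv with hv | hv
    · exact hVxA hs₀ (hq1 v hv)
    rw [SimpleGraph.Walk.mem_support_append_iff] at hv
    rcases hv with hv | hv
    · rw [SimpleGraph.Walk.support_reverse, List.mem_reverse] at hv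
      exact hp v hv
    · exact hVxA (hS' t ht).1 (hq2 v hv)
  obtain ⟨w₀, hw₀A, N, hNM, hNc, hw₀N, P, hP1, hP2, hP3⟩ :=
    star_lemma H A MW hMWc hMWA (c.mhat s₀) hreach
  set M : Set V := {t ∈ S' | c.mhat t ∈ N} with hMdef
  have hNsub : N ⊆ c.mhat '' M := by
    intro u hu
    obtain ⟨t, ht, rfl⟩ := hNM hu
    exact ⟨t, ⟨ht, hu⟩, rfl⟩
  have hMc : ¬ M.Countable := fun h => hNc ((h.image c.mhat).mono hNsub)
  refine ⟨w₀, M, fun t ht => P (c.mhat t) ht.2, ?_, ?_, hMc, ?_, ?_, ?_, ?_, ?_⟩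
  · exact hw₀A
  · exact fun t ht => hS'S ht.1
  · exact fun t ht => (hS' t ht.1).1
  · intro t ht h
    exact hw₀N (h ▸ ht.2)
  · exact fun t ht => hP1 (c.mhat t) ht.2
  · exact fun t ht v hv => hP2 (c.mhat t) ht.2 v hv
  · intro t ht t' ht' hne v hv hv'
    exact hP3 (c.mhat t) ht.2 (c.mhat t') ht'.2 (fun h => hne (c.mhat_inj h)) v hv hv'


end Ctx

/-- One level of the fan hierarchy: a centre, an uncountable index family, and the fan. -/
structure LDS {W : Type v} {V : Type u} [PartialOrder V] {H : SimpleGraph W}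
    {X : SimpleGraph V} (c : Ctx H X) where
  w : W
  M : Set V
  Q : ∀ t, t ∈ M → H.Walk w (c.mhat t)

namespace Ctx

variable {W : Type v} {V : Type u} [PartialOrder V]
  {H : SimpleGraph W} {X : SimpleGraph V} (c : Ctx H X)

/-- Requirements for one level of the fan hierarchy. -/
structure GoodLD (bads S : Set V) (d : LDS c) : Prop where
  pi_w : c.pi d.w ∉ bads
  M_sub : d.M ⊆ S
  M_unc : ¬ d.M.Countable
  not_bads : ∀ t ∈ d.M, t ∉ bads
  mhat_ne : ∀ t (ht : t ∈ d.M), c.mhat t ≠ d.w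
  isPath : ∀ t (ht : t ∈ d.M), (d.Q t ht).IsPath
  supp_avoid : ∀ t (ht : t ∈ d.M) v, v ∈ (d.Q t ht).support → c.pi v ∉ bads
  disj : ∀ t (ht : t ∈ d.M) t' (ht' : t' ∈ d.M), t ≠ t' →
    ∀ v, v ∈ (d.Q t ht).support → v ∈ (d.Q t' ht').support → v = d.w

lemma exists_goodLD (bads : Set V) (hfin : bads.Finite) (S : Set V) (hS : ¬ S.Countable) :
    ∃ d : LDS c, c.GoodLD bads S d := by
  obtain ⟨w₀, M, Q, h1, h2, h3, h4, h5, h6, h7, h8⟩ := c.step bads hfin S hS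
  exact ⟨⟨w₀, M, Q⟩, ⟨h1, h2, h3, h4, h5, h6, h7, h8⟩⟩

/-- Branch sets already used by the first `k` levels. -/
def bSet (f : ℕ → LDS c) (k : ℕ) : Set V := (fun j => c.pi ((f j).w)) '' {j | j < k}

lemma bSet_congr {f g : ℕ → LDS c} {k : ℕ} (h : ∀ j < k, f j = g j) :
    c.bSet f k = c.bSet g k := by
  unfold bSet
  apply Set.image_congr
  intro j hj
  rw [h j hj]

lemma bSet_finite (f : ℕ → LDS c) (k : ℕ) : (c.bSet f k).Finite :=
  (Set.finite_lt_nat k).image _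

/-- The index family the `k`-th level draws from. -/
def pSet (f : ℕ → LDS c) : ℕ → Set V
  | 0 => Set.univ
  | k + 1 => (f k).M

lemma pSet_congr {f g : ℕ → LDS c} {k : ℕ} (h : ∀ j < k, f j = g j) :
    c.pSet f k = c.pSet g k := by
  cases k with
  | zero => rfl
  | succ k => show (f k).M = (g k).M; rw [h k (Nat.lt_succ_self k)]

def BProps (f : ℕ → LDS c) (n : ℕ) : Prop :=
  ∀ k, k ≤ n → c.GoodLD (c.bSet f k) (c.pSet f k) (f k)

noncomputable def build : ∀ n : ℕ, {f : ℕ → LDS c // c.BProps f n}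
  | 0 =>
    ⟨fun _ => (c.exists_goodLD ∅ Set.finite_empty Set.univ c.uncnt).choose, by
      intro k hk
      interval_cases k
      have hB : c.bSet (fun _ => (c.exists_goodLD ∅ Set.finite_empty Set.univ
          c.uncnt).choose) 0 = ∅ := by
        unfold bSet
        have : ({j : ℕ | j < 0} : Set ℕ) = ∅ := by ext j; simp
        rw [this, Set.image_empty]
      rw [hB]
      exact (c.exists_goodLD ∅ Set.finite_empty Set.univ c.uncnt).choose_spec⟩
  | n + 1 =>
    ⟨fun k => if k ≤ n then (build n).1 k else
        (c.exists_goodLD (c.bSet (build n).1 (n+1)) (c.bSet_finite _ _) (((build n).1 n).M)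
          ((build n).2 n le_rfl).M_unc).choose, by
      intro k hk
      set f := (build n).1 with hfdef
      set dnew := (c.exists_goodLD (c.bSet (build n).1 (n+1)) (c.bSet_finite _ _)
          (((build n).1 n).M) ((build n).2 n le_rfl).M_unc).choose with hddef
      by_cases hkn : k ≤ n
      · have h1 : c.bSet (fun k => if k ≤ n then f k else dnew) k = c.bSet f k :=
          c.bSet_congr (by intro j hj; rw [if_pos (show j ≤ n by omega)])
        have h2 : c.pSet (fun k => if k ≤ n then f k else dnew) k = c.pSet f k :=
          c.pSet_congr (by intro j hj; rw [if_pos (show j ≤ n by omega)])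
        rw [h1, h2]
        show c.GoodLD (c.bSet f k) (c.pSet f k) (if k ≤ n then f k else dnew)
        rw [if_pos hkn]
        exact (build n).2 k hkn
      · have hk1 : k = n + 1 := by omega
        subst hk1
        have h1 : c.bSet (fun k => if k ≤ n then f k else dnew) (n+1) = c.bSet f (n+1) :=
          c.bSet_congr (by intro j hj; rw [if_pos (show j ≤ n by omega)])
        have h2 : c.pSet (fun k => if k ≤ n then f k else dnew) (n+1) = (f n).M := by
          show ((if n ≤ n then f n else dnew)).M = (f n).M
          simp
        rw [h1, h2]
        show c.GoodLD (c.bSet f (n+1)) ((f n).M) (if n + 1 ≤ n then f (n+1) else dnew)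
        rw [if_neg hkn]
        exact (c.exists_goodLD (c.bSet (build n).1 (n+1)) (c.bSet_finite _ _)
          (((build n).1 n).M) ((build n).2 n le_rfl).M_unc).choose_spec⟩

/-- The full fan hierarchy. -/
noncomputable def seq (n : ℕ) : LDS c := (c.build n).1 n

lemma build_stable : ∀ n k, k ≤ n → (c.build n).1 k = c.seq k := by
  intro n
  induction n with
  | zero =>
    intro k hk
    interval_cases k
    rfl
  | succ n IH =>
    intro k hk
    by_cases hkn : k ≤ n
    · have h1 : (c.build (n+1)).1 k = (c.build n).1 k := by
        show (if k ≤ n then (c.build n).1 k else _) = (c.build n).1 k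
        simp [hkn]
      rw [h1, IH k hkn]
    · have hk1 : k = n + 1 := by omega
      subst hk1
      rfl

lemma seq_good (k : ℕ) : c.GoodLD (c.bSet c.seq k) (c.pSet c.seq k) (c.seq k) := by
  have h := (c.build k).2 k le_rfl
  have h1 : c.bSet (c.build k).1 k = c.bSet c.seq k :=
    c.bSet_congr (fun j hj => c.build_stable k j (le_of_lt hj))
  have h2 : c.pSet (c.build k).1 k = c.pSet c.seq k :=
    c.pSet_congr (fun j hj => c.build_stable k j (le_of_lt hj))
  rw [h1, h2] at h
  exact h

/-- The branch vertices. -/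
noncomputable def wv (k : ℕ) : W := (c.seq k).w
/-- The index families. -/
noncomputable def Mv (k : ℕ) : Set V := (c.seq k).M
/-- The fans. -/
noncomputable def Qv (k : ℕ) : ∀ t, t ∈ c.Mv k → H.Walk (c.wv k) (c.mhat t) := (c.seq k).Q

lemma Mv_unc (k : ℕ) : ¬ (c.Mv k).Countable := (c.seq_good k).M_unc

lemma Mv_mono : ∀ {j k : ℕ}, j ≤ k → c.Mv k ⊆ c.Mv j := by
  intro j k
  induction k with
  | zero =>
    intro hj
    have hj0 : j = 0 := Nat.le_zero.mp hj
    subst hj0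
    exact subset_rfl
  | succ k IH =>
    intro hj
    by_cases hjk : j = k + 1
    · subst hjk; exact subset_rfl
    · have hj' : j ≤ k := by omega
      have hsub : c.Mv (k+1) ⊆ c.Mv k := by
        have := (c.seq_good (k+1)).M_sub
        exact this
      exact (subset_trans hsub (IH hj'))

lemma pi_wv_ne (j k : ℕ) (hjk : j < k) : c.pi (c.wv k) ≠ c.pi (c.wv j) := by
  have h := (c.seq_good k).pi_w
  intro heq
  apply h
  exact ⟨j, hjk, heq.symm⟩

lemma wv_inj : Function.Injective c.wv := by
  intro j k h
  by_contra hne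
  rcases Nat.lt_or_ge j k with hlt | hge
  · exact c.pi_wv_ne j k hlt (by rw [h])
  · have : k < j := by omega
    exact c.pi_wv_ne k j this (by rw [h])

lemma Qv_isPath (k : ℕ) (t : V) (ht : t ∈ c.Mv k) : (c.Qv k t ht).IsPath :=
  (c.seq_good k).isPath t ht

lemma Qv_mhat_ne (k : ℕ) (t : V) (ht : t ∈ c.Mv k) : c.mhat t ≠ c.wv k :=
  (c.seq_good k).mhat_ne t ht

lemma Qv_avoid (k : ℕ) (t : V) (ht : t ∈ c.Mv k) (v : W)
    (hv : v ∈ (c.Qv k t ht).support) (j : ℕ) (hj : j < k) : v ≠ c.wv j := by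
  have h := (c.seq_good k).supp_avoid t ht v hv
  intro heq
  apply h
  refine ⟨j, hj, ?_⟩
  rw [heq]
  rfl

lemma Qv_disj (k : ℕ) (t : V) (ht : t ∈ c.Mv k) (t' : V) (ht' : t' ∈ c.Mv k) (hne : t ≠ t')
    (v : W) (hv : v ∈ (c.Qv k t ht).support) (hv' : v ∈ (c.Qv k t' ht').support) :
    v = c.wv k := (c.seq_good k).disj t ht t' ht' hne v hv hv'


lemma exists_pair_path (i j : ℕ) (hij : i < j) (Z : Set W) (hZ : Z.Countable) :
    ∃ p : H.Walk (c.wv i) (c.wv j), p.IsPath ∧ 2 ≤ p.length ∧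
      (∀ v ∈ p.support, v ∈ Z → v = c.wv i ∨ v = c.wv j) ∧
      (∀ k, c.wv k ∈ p.support → k = i ∨ k = j) := by
  classical
  set BadI : Set W := (Z ∪ Set.range c.wv) \ {c.wv i} with hBadI
  set BadJ : Set W := (Z ∪ Set.range c.wv) \ {c.wv j} with hBadJ
  have hBadIc : BadI.Countable := (hZ.union (countable_range c.wv)).mono diff_subset
  have hBadJc : BadJ.Countable := (hZ.union (countable_range c.wv)).mono diff_subset
  have hkill : ∀ (k : ℕ) (Bad : Set W), Bad.Countable → c.wv k ∉ Bad →
      {t | ∃ ht : t ∈ c.Mv k, ∃ v ∈ (c.Qv k t ht).support, v ∈ Bad}.Countable := by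
    intro k Bad hBadc hwk
    have hsub : {t | ∃ ht : t ∈ c.Mv k, ∃ v ∈ (c.Qv k t ht).support, v ∈ Bad} ⊆
        ⋃ v ∈ Bad, {t | ∃ ht : t ∈ c.Mv k, v ∈ (c.Qv k t ht).support} := by
      rintro t ⟨ht, v, hv1, hv2⟩
      exact mem_biUnion hv2 ⟨ht, hv1⟩
    refine (hBadc.biUnion fun v hv => ?_).mono hsub
    apply Set.Subsingleton.countable
    rintro t ⟨htM, hv1⟩ t' ⟨ht'M, hv2⟩
    by_contra hne
    have := c.Qv_disj k t htM t' ht'M hne v hv1 hv2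
    rw [this] at hv
    exact hwk hv
  have hwinej : c.wv i ≠ c.wv j := fun h => (Nat.ne_of_lt hij) (c.wv_inj h)
  have hkI : {t | ∃ ht : t ∈ c.Mv i, ∃ v ∈ (c.Qv i t ht).support, v ∈ BadI}.Countable :=
    hkill i BadI hBadIc (fun h => h.2 rfl)
  have hkJ : {t | ∃ ht : t ∈ c.Mv j, ∃ v ∈ (c.Qv j t ht).support, v ∈ BadJ}.Countable :=
    hkill j BadJ hBadJc (fun h => h.2 rfl)
  obtain ⟨t, htj, htk⟩ : (c.Mv j \
      ({t | ∃ ht : t ∈ c.Mv i, ∃ v ∈ (c.Qv i t ht).support, v ∈ BadI} ∪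
       {t | ∃ ht : t ∈ c.Mv j, ∃ v ∈ (c.Qv j t ht).support, v ∈ BadJ})).Nonempty := by
    rcases Set.eq_empty_or_nonempty (c.Mv j \ _) with h | h
    · exfalso
      apply c.Mv_unc j
      refine ((hkI.union hkJ).mono ?_)
      intro t ht
      by_contra htn
      exact absurd (Set.eq_empty_iff_forall_notMem.mp h t) (fun hcon => hcon ⟨ht, htn⟩)
    · exact h
  have hti : t ∈ c.Mv i := c.Mv_mono (le_of_lt hij) htj
  have hQI : ∀ v ∈ (c.Qv i t hti).support, v ∉ BadI := by
    intro v hv hvB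
    exact htk (Or.inl ⟨hti, v, hv, hvB⟩)
  have hQJ : ∀ v ∈ (c.Qv j t htj).support, v ∉ BadJ := by
    intro v hv hvB
    exact htk (Or.inr ⟨htj, v, hv, hvB⟩)
  have hQIj : c.wv j ∉ (c.Qv i t hti).support := by
    intro h
    exact hQI _ h ⟨Or.inr ⟨j, rfl⟩, fun hh => hwinej (by simpa using hh.symm)⟩
  have hQJi : c.wv i ∉ (c.Qv j t htj).support := by
    intro h
    exact hQJ _ h ⟨Or.inr ⟨i, rfl⟩, fun hh => hwinej (by simpa using hh)⟩
  set woo := (c.Qv i t hti).append (c.Qv j t htj).reverse with hwoo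
  refine ⟨woo.bypass, woo.bypass_isPath, ?_, ?_, ?_⟩
  case _ =>
    -- length at least 2
    by_contra hlen
    push_neg at hlen
    have h01 : woo.bypass.length = 0 ∨ woo.bypass.length = 1 := by omega
    rcases h01 with h0 | h1
    · exact hwinej (SimpleGraph.Walk.eq_of_length_eq_zero h0)
    · have hedges := FatAux.edges_of_length_one woo.bypass h1
      have hmem : s(c.wv i, c.wv j) ∈ woo.bypass.edges := by rw [hedges]; simp
      have hmem' : s(c.wv i, c.wv j) ∈ woo.edges :=
        SimpleGraph.Walk.edges_bypass_subset woo hmem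
      rw [hwoo, SimpleGraph.Walk.edges_append, List.mem_append] at hmem'
      rcases hmem' with h | h
      · exact hQIj ((c.Qv i t hti).snd_mem_support_of_mem_edges h)
      · rw [SimpleGraph.Walk.edges_reverse, List.mem_reverse] at h
        exact hQJi ((c.Qv j t htj).fst_mem_support_of_mem_edges h)
  all_goals
    have hsup : ∀ v ∈ woo.bypass.support,
        v ∈ (c.Qv i t hti).support ∨ v ∈ (c.Qv j t htj).support := by
      intro v hv
      have hv' := SimpleGraph.Walk.support_bypass_subset woo hv
      rw [hwoo, SimpleGraph.Walk.mem_support_append_iff] at hv'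
      rcases hv' with h | h
      · exact Or.inl h
      · rw [SimpleGraph.Walk.support_reverse, List.mem_reverse] at h
        exact Or.inr h
  case _ =>
    intro v hv hvZ
    rcases hsup v hv with h | h
    · by_cases hvi : v = c.wv i
      · exact Or.inl hvi
      · exact absurd ⟨Or.inl hvZ, hvi⟩ (hQI v h)
    · by_cases hvj : v = c.wv j
      · exact Or.inr hvj
      · exact absurd ⟨Or.inl hvZ, hvj⟩ (hQJ v h)
  case _ =>
    intro k hk
    rcases hsup (c.wv k) hk with h | h
    · by_cases hki : k = i
      · exact Or.inl hki
      · exact absurd ⟨Or.inr ⟨k, rfl⟩, fun hh => hki (c.wv_inj (by simpa using hh))⟩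
          (hQI _ h)
    · by_cases hkj : k = j
      · exact Or.inr hkj
      · exact absurd ⟨Or.inr ⟨k, rfl⟩, fun hh => hkj (c.wv_inj (by simpa using hh))⟩
          (hQJ _ h)


/-- A "round": one system of paths, one for each pair of branch vertices. -/
def RoundMap : Type v := ∀ i j : ℕ, i < j → H.Walk (c.wv i) (c.wv j)

def IsRound (g : c.RoundMap) : Prop := ∀ i j (hij : i < j),
  (g i j hij).IsPath ∧ 2 ≤ (g i j hij).length ∧
  (∀ k, c.wv k ∈ (g i j hij).support → k = i ∨ k = j) ∧
  (∀ i' j' (hij' : i' < j'), (i, j) ≠ (i', j') → ∀ v, v ∈ (g i j hij).support →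
    v ∈ (g i' j' hij').support → (v = c.wv i ∨ v = c.wv j) ∧ (v = c.wv i' ∨ v = c.wv j'))

def RoundAvoid (Z : Set W) (g : c.RoundMap) : Prop :=
  ∀ i j (hij : i < j), ∀ v ∈ (g i j hij).support, v ∈ Z → v = c.wv i ∨ v = c.wv j

/-- Partial rounds, defined on pairs with code `< n`. -/
def PR (n : ℕ) : Type v := ∀ i j : ℕ, i < j → Nat.pair i j < n → H.Walk (c.wv i) (c.wv j)

def supSet {n : ℕ} (h : c.PR n) : Set W :=
  {v | ∃ i, ∃ j, ∃ hij : i < j, ∃ hlt : Nat.pair i j < n, v ∈ (h i j hij hlt).support}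

lemma supSet_countable {n : ℕ} (h : c.PR n) : (c.supSet h).Countable := by
  classical
  have hsub : c.supSet h ⊆ ⋃ (p : ℕ × ℕ),
      {v | ∃ (hij : p.1 < p.2) (hlt : Nat.pair p.1 p.2 < n), v ∈ (h p.1 p.2 hij hlt).support} := by
    rintro v ⟨i, j, hij, hlt, hv⟩
    exact mem_iUnion.2 ⟨(i, j), hij, hlt, hv⟩
  refine (countable_iUnion fun p => ?_).mono hsub
  by_cases h1 : p.1 < p.2
  · by_cases h2 : Nat.pair p.1 p.2 < n
    · have : {v | ∃ (hij : p.1 < p.2) (hlt : Nat.pair p.1 p.2 < n),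
          v ∈ (h p.1 p.2 hij hlt).support} ⊆ {v | v ∈ (h p.1 p.2 h1 h2).support} := by
        rintro v ⟨hij, hlt, hv⟩
        exact hv
      exact ((h p.1 p.2 h1 h2).support.finite_toSet.countable).mono this
    · have : {v | ∃ (hij : p.1 < p.2) (hlt : Nat.pair p.1 p.2 < n),
          v ∈ (h p.1 p.2 hij hlt).support} ⊆ ∅ := by
        rintro v ⟨hij, hlt, hv⟩
        exact absurd hlt h2
      exact countable_empty.mono this
  · have : {v | ∃ (hij : p.1 < p.2) (hlt : Nat.pair p.1 p.2 < n),
        v ∈ (h p.1 p.2 hij hlt).support} ⊆ ∅ := by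
      rintro v ⟨hij, hlt, hv⟩
      exact absurd hij h1
    exact countable_empty.mono this

def PProps (Z : Set W) {n : ℕ} (h : c.PR n) : Prop :=
  ∀ i j (hij : i < j) (hlt : Nat.pair i j < n),
    (h i j hij hlt).IsPath ∧ 2 ≤ (h i j hij hlt).length ∧
    (∀ k, c.wv k ∈ (h i j hij hlt).support → k = i ∨ k = j) ∧
    (∀ v ∈ (h i j hij hlt).support, v ∈ Z → v = c.wv i ∨ v = c.wv j) ∧
    (∀ i' j' (hij' : i' < j') (hlt' : Nat.pair i' j' < n), (i, j) ≠ (i', j') →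
      ∀ v, v ∈ (h i j hij hlt).support → v ∈ (h i' j' hij' hlt').support →
        (v = c.wv i ∨ v = c.wv j) ∧ (v = c.wv i' ∨ v = c.wv j'))

noncomputable def buildR (Z : Set W) (hZ : Z.Countable) : ∀ n : ℕ, {h : c.PR n // c.PProps Z h}
  | 0 => ⟨fun _ _ _ hlt => absurd hlt (Nat.not_lt_zero _), by
      intro i j hij hlt
      exact absurd hlt (Nat.not_lt_zero _)⟩
  | n + 1 =>
    ⟨fun i j hij hlt => if hlt' : Nat.pair i j < n then (buildR Z hZ n).1 i j hij hlt' else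
        (c.exists_pair_path i j hij (Z ∪ c.supSet (buildR Z hZ n).1)
          (hZ.union (c.supSet_countable _))).choose, by
      intro i j hij hlt
      set prev := buildR Z hZ n with hprev
      have hmain : ∀ i' j' (hij' : i' < j') (hlt'' : ¬ Nat.pair i' j' < n),
          let pth := (c.exists_pair_path i' j' hij' (Z ∪ c.supSet prev.1)
            (hZ.union (c.supSet_countable _))).choose
          pth.IsPath ∧ 2 ≤ pth.length ∧
          (∀ v ∈ pth.support, v ∈ Z ∪ c.supSet prev.1 → v = c.wv i' ∨ v = c.wv j') ∧
          (∀ k, c.wv k ∈ pth.support → k = i' ∨ k = j') := by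
        intro i' j' hij' hlt''
        have hspec := (c.exists_pair_path i' j' hij' (Z ∪ c.supSet prev.1)
            (hZ.union (c.supSet_countable _))).choose_spec
        exact ⟨hspec.1, hspec.2.1, hspec.2.2.1, hspec.2.2.2⟩
      by_cases hlt' : Nat.pair i j < n
      · simp only [dif_pos hlt']
        obtain ⟨hp1, hp2, hp3, hp4, hp5⟩ := prev.2 i j hij hlt'
        refine ⟨hp1, hp2, hp3, hp4, ?_⟩
        intro i' j' hij' hltp' hne v hv hv'
        by_cases hlt'' : Nat.pair i' j' < n
        · simp only [dif_pos hlt''] at hv'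
          exact hp5 i' j' hij' hlt'' hne v hv hv'
        · simp only [dif_neg hlt''] at hv'
          obtain ⟨-, -, hz, hk⟩ := hmain i' j' hij' hlt''
          have hsnd : v = c.wv i' ∨ v = c.wv j' :=
            hz v hv' (Or.inr ⟨i, j, hij, hlt', hv⟩)
          refine ⟨?_, hsnd⟩
          rcases hsnd with rfl | rfl
          · rcases hp3 i' hv with rfl | rfl
            · exact Or.inl rfl
            · exact Or.inr rfl
          · rcases hp3 j' hv with rfl | rfl
            · exact Or.inl rfl
            · exact Or.inr rfl
      · simp only [dif_neg hlt']
        obtain ⟨hq1, hq2, hqz, hqk⟩ := hmain i j hij hlt'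
        refine ⟨hq1, hq2, hqk, ?_, ?_⟩
        · intro v hv hvZ
          exact hqz v hv (Or.inl hvZ)
        · intro i' j' hij' hltp' hne v hv hv'
          by_cases hlt'' : Nat.pair i' j' < n
          · simp only [dif_pos hlt''] at hv'
            obtain ⟨-, -, hp3', -, -⟩ := prev.2 i' j' hij' hlt''
            have hfst : v = c.wv i ∨ v = c.wv j :=
              hqz v hv (Or.inr ⟨i', j', hij', hlt'', hv'⟩)
            refine ⟨hfst, ?_⟩
            rcases hfst with rfl | rfl
            · rcases hp3' i hv' with rfl | rfl
              · exact Or.inl rfl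
              · exact Or.inr rfl
            · rcases hp3' j hv' with rfl | rfl
              · exact Or.inl rfl
              · exact Or.inr rfl
          · exfalso
            apply hne
            have h1 : Nat.pair i j = n := by omega
            have h2 : Nat.pair i' j' = n := by omega
            have := Nat.pair_eq_pair.mp (h1.trans h2.symm)
            exact Prod.ext this.1 this.2⟩

/-- The walk assigned to a pair by the limit of the partial rounds. -/
noncomputable def roundWalk (Z : Set W) (hZ : Z.Countable) (i j : ℕ) (hij : i < j) :
    H.Walk (c.wv i) (c.wv j) :=
  (c.buildR Z hZ (Nat.pair i j + 1)).1 i j hij (Nat.lt_succ_self _)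

lemma buildR_stable (Z : Set W) (hZ : Z.Countable) :
    ∀ n i j (hij : i < j) (hlt : Nat.pair i j < n),
      (c.buildR Z hZ n).1 i j hij hlt = c.roundWalk Z hZ i j hij := by
  intro n
  induction n with
  | zero => intro i j hij hlt; exact absurd hlt (Nat.not_lt_zero _)
  | succ n IH =>
    intro i j hij hlt
    by_cases hlt' : Nat.pair i j < n
    · have h1 : (c.buildR Z hZ (n+1)).1 i j hij hlt = (c.buildR Z hZ n).1 i j hij hlt' := by
        show (if hlt' : Nat.pair i j < n then (c.buildR Z hZ n).1 i j hij hlt' else _) = _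
        rw [dif_pos hlt']
      rw [h1, IH i j hij hlt']
    · have h1 : Nat.pair i j = n := by omega
      subst h1
      rfl

lemma exists_round (Z : Set W) (hZ : Z.Countable) :
    ∃ g : c.RoundMap, c.IsRound g ∧ c.RoundAvoid Z g := by
  refine ⟨c.roundWalk Z hZ, ?_, ?_⟩
  · intro i j hij
    have hlt : Nat.pair i j < Nat.pair i j + 1 := Nat.lt_succ_self _
    obtain ⟨h1, h2, h3, h4, h5⟩ := (c.buildR Z hZ (Nat.pair i j + 1)).2 i j hij hlt
    rw [c.buildR_stable Z hZ (Nat.pair i j + 1) i j hij hlt] at h1 h2 h3 h4 h5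
    refine ⟨h1, h2, h3, ?_⟩
    intro i' j' hij' hne v hv hv'
    set n := max (Nat.pair i j) (Nat.pair i' j') + 1 with hn
    have hlt1 : Nat.pair i j < n := by omega
    have hlt2 : Nat.pair i' j' < n := by omega
    obtain ⟨-, -, -, -, h5'⟩ := (c.buildR Z hZ n).2 i j hij hlt1
    have := h5' i' j' hij' hlt2 hne v
    rw [c.buildR_stable Z hZ n i j hij hlt1,
        c.buildR_stable Z hZ n i' j' hij' hlt2] at this
    exact this hv hv'
  · intro i j hij v hv hvZ
    have hlt : Nat.pair i j < Nat.pair i j + 1 := Nat.lt_succ_self _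
    obtain ⟨-, -, -, h4, -⟩ := (c.buildR Z hZ (Nat.pair i j + 1)).2 i j hij hlt
    rw [c.buildR_stable Z hZ (Nat.pair i j + 1) i j hij hlt] at h4
    exact h4 v hv hvZ


/-- Rounds, bundled with their properties. -/
def RoundT : Type v := {g : c.RoundMap // c.IsRound g}

def compatible (R R' : c.RoundT) : Prop :=
  ∀ i j (hij : i < j), ∀ i' j' (hij' : i' < j'), ∀ v,
    v ∈ (R.1 i j hij).support → v ∈ (R'.1 i' j' hij').support →
    (v = c.wv i ∨ v = c.wv j) ∧ (v = c.wv i' ∨ v = c.wv j')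

def supAll (g : c.RoundMap) : Set W :=
  {v | ∃ i, ∃ j, ∃ hij : i < j, v ∈ (g i j hij).support}

lemma supAll_countable (g : c.RoundMap) : (c.supAll g).Countable := by
  classical
  have hsub : c.supAll g ⊆ ⋃ (p : ℕ × ℕ),
      {v | ∃ hij : p.1 < p.2, v ∈ (g p.1 p.2 hij).support} := by
    rintro v ⟨i, j, hij, hv⟩
    exact mem_iUnion.2 ⟨(i, j), hij, hv⟩
  refine (countable_iUnion fun p => ?_).mono hsub
  by_cases h1 : p.1 < p.2
  · have : {v | ∃ hij : p.1 < p.2, v ∈ (g p.1 p.2 hij).support} ⊆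
        {v | v ∈ (g p.1 p.2 h1).support} := by
      rintro v ⟨hij, hv⟩
      exact hv
    exact ((g p.1 p.2 h1).support.finite_toSet.countable).mono this
  · have : {v | ∃ hij : p.1 < p.2, v ∈ (g p.1 p.2 hij).support} ⊆ ∅ := by
      rintro v ⟨hij, hv⟩
      exact absurd hij h1
    exact countable_empty.mono this

lemma exists_uncountable_family : ∃ RS : Set c.RoundT, ¬ RS.Countable ∧
    ∀ R ∈ RS, ∀ R' ∈ RS, R ≠ R' → c.compatible R R' := by
  classical
  obtain ⟨RS, hmax⟩ : ∃ RS, Maximal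
      (· ∈ {RS : Set c.RoundT | ∀ R ∈ RS, ∀ R' ∈ RS, R ≠ R' → c.compatible R R'}) RS := by
    apply zorn_subset
    intro ch hch hchain
    refine ⟨⋃₀ ch, ?_, fun s hs => subset_sUnion_of_mem hs⟩
    rintro R ⟨F, hF, hRF⟩ R' ⟨F', hF', hR'F'⟩ hne
    rcases hchain.total hF hF' with h | h
    · exact hch hF' R (h hRF) R' hR'F' hne
    · exact hch hF R hRF R' (h hR'F') hne
  refine ⟨RS, ?_, hmax.1⟩
  intro hc
  set Z : Set W := ⋃ R ∈ RS, c.supAll R.1 with hZdef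
  have hZc : Z.Countable := hc.biUnion fun R _ => c.supAll_countable R.1
  obtain ⟨g₀, hg₀, havoid⟩ := c.exists_round Z hZc
  set R₀ : c.RoundT := ⟨g₀, hg₀⟩ with hR₀def
  have h01 : (0 : ℕ) < 1 := one_pos
  obtain ⟨hP, hlen, -, -⟩ := hg₀ 0 1 h01
  obtain ⟨v₀, hv₀, hv₀0, hv₀1⟩ := FatAux.internal_vertex _ hP hlen
  have hR₀RS : R₀ ∉ RS := by
    intro hmem
    have hv₀Z : v₀ ∈ Z := mem_biUnion hmem ⟨0, 1, h01, hv₀⟩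
    rcases havoid 0 1 h01 v₀ hv₀ hv₀Z with h | h
    · exact hv₀0 h
    · exact hv₀1 h
  have hcompat : ∀ R ∈ RS, c.compatible R₀ R ∧ c.compatible R R₀ := by
    intro R hR
    constructor
    · intro i j hij i' j' hij' v hv hv'
      have hvZ : v ∈ Z := mem_biUnion hR ⟨i', j', hij', hv'⟩
      have hfst := havoid i j hij v hv hvZ
      refine ⟨hfst, ?_⟩
      rcases hfst with rfl | rfl
      · rcases (R.2 i' j' hij').2.2.1 i hv' with rfl | rfl
        · exact Or.inl rfl
        · exact Or.inr rfl
      · rcases (R.2 i' j' hij').2.2.1 j hv' with rfl | rfl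
        · exact Or.inl rfl
        · exact Or.inr rfl
    · intro i j hij i' j' hij' v hv hv'
      have hvZ : v ∈ Z := mem_biUnion hR ⟨i, j, hij, hv⟩
      have hsnd := havoid i' j' hij' v hv' hvZ
      refine ⟨?_, hsnd⟩
      rcases hsnd with rfl | rfl
      · rcases (R.2 i j hij).2.2.1 i' hv with rfl | rfl
        · exact Or.inl rfl
        · exact Or.inr rfl
      · rcases (R.2 i j hij).2.2.1 j' hv with rfl | rfl
        · exact Or.inl rfl
        · exact Or.inr rfl
  have hins : insert R₀ RS ∈
      {RS : Set c.RoundT | ∀ R ∈ RS, ∀ R' ∈ RS, R ≠ R' → c.compatible R R'} := by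
    rintro R (rfl | hR) R' (rfl | hR') hne
    · exact absurd rfl hne
    · exact (hcompat R' hR').1
    · exact (hcompat R hR).2
    · exact hmax.1 R hR R' hR' hne
  exact hR₀RS (hmax.2 hins (subset_insert _ _) (mem_insert _ _))

/-- The main construction: `H` contains a fat `TK_ℵ0`. -/
theorem main (c : Ctx H X) : HasFatTKAleph0 H := by
  classical
  obtain ⟨RS, hRSc, hRS⟩ := c.exists_uncountable_family
  have h1 : Cardinal.aleph 1 ≤ Cardinal.mk ↥RS := by
    by_contra h
    exact hRSc ((Cardinal.countable_iff_lt_aleph_one RS).mpr (lt_of_not_ge h))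
  have hemb : Nonempty ((Cardinal.aleph 1).out ↪ ↥RS) := by
    rw [← Cardinal.lift_mk_le']
    rw [Cardinal.mk_out]
    rw [Cardinal.lift_aleph, Ordinal.lift_one, Cardinal.lift_uzero]
    exact h1
  obtain ⟨ι⟩ := hemb
  have hval_ne : ∀ {α α' : (Cardinal.aleph 1).out}, α ≠ α' → (ι α).1 ≠ (ι α').1 := by
    intro α α' hne hval
    exact hne (ι.injective (Subtype.ext hval))
  have hdisj : ∀ (i j : ℕ) (h : i < j) (α : (Cardinal.aleph 1).out)
      (i' j' : ℕ) (h' : i' < j') (α' : (Cardinal.aleph 1).out),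
      (i, j, α) ≠ (i', j', α') → ∀ v : W, v ∈ ((ι α).1.1 i j h).support →
        v ∈ ((ι α').1.1 i' j' h').support →
        (v = c.wv i ∨ v = c.wv j) ∧ (v = c.wv i' ∨ v = c.wv j') := by
    intro i j h α i' j' h' α' hne v hv hv'
    by_cases hα : α = α'
    · subst hα
      have hpair : (i, j) ≠ (i', j') := by
        intro hp
        apply hne
        have hi : i = i' := congrArg Prod.fst hp
        have hj : j = j' := congrArg Prod.snd hp
        subst hi
        subst hj
        rfl
      exact ((ι α).1.2 i j h).2.2.2 i' j' h' hpair v hv hv'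
    · exact hRS (ι α).1 (ι α).2 (ι α').1 (ι α').2 (hval_ne hα) i j h i' j' h' v hv hv'
  refine ⟨⟨c.wv, c.wv_inj, (Cardinal.aleph 1).out, Cardinal.mk_out _,
    fun i j h α => (ι α).1.1 i j h,
    fun i j h α => ((ι α).1.2 i j h).1,
    fun i j h α k hk => ((ι α).1.2 i j h).2.2.1 k hk,
    hdisj, ?_⟩⟩
  intro i j h α α' hne heq
  obtain ⟨v, hv, hvi, hvj⟩ := FatAux.internal_vertex _ (((ι α).1.2 i j h).1)
    (((ι α).1.2 i j h).2.1)
  have heq' : ((ι α).1.1 i j h) = ((ι α').1.1 i j h) := heq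
  have hv' : v ∈ ((ι α').1.1 i j h).support := by rw [← heq']; exact hv
  have hne3 : (i, j, α) ≠ (i, j, α') := by
    intro hp
    apply hne
    have := congrArg (fun q : ℕ × ℕ × (Cardinal.aleph 1).out => q.2.2) hp
    exact this
  have := hdisj i j h α i j h α' hne3 v hv hv'
  rcases this.1 with h1 | h1
  · exact hvi h1
  · exact hvj h1

end Ctx

end FatAux

/-- Every `IX`, where `X` is an Aronszajn-tree graph, contains a fat `TK_ℵ0`. -/
theorem stmt10 {W : Type v} {V : Type u} [PartialOrder V] (H : SimpleGraph W)
    (X : SimpleGraph V) (hX : IsATGraph X) (hH : IsIX H X) :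
    HasFatTKAleph0 H := by
  obtain ⟨Vx, h1, h2, h3⟩ := hH
  obtain ⟨⟨⟨r, hr⟩, hchain, hwf, hunc, hchains, hlev⟩, hcomp, hcof⟩ := hX
  exact FatAux.Ctx.main ⟨Vx, h1, h2, h3, r, hr, hchain, hwf, hunc, hlev, hcof⟩
end

section
/- Every countable connected graph has a normal spanning tree. -/
universe u v

set_option linter.unusedSectionVars false

namespace NST

open SimpleGraph Walk

variable {V : Type u} [DecidableEq V] {G : SimpleGraph V}

/-- ancestor relation of a parent function -/
def Anc (p : V → V) (x y : V) : Prop := ∃ k, p^[k] y = x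

lemma anc_refl (p : V → V) (x : V) : Anc p x x := ⟨0, rfl⟩

lemma anc_trans {p : V → V} {x y z : V} (h1 : Anc p x y) (h2 : Anc p y z) : Anc p x z := by
  obtain ⟨k, hk⟩ := h1; obtain ⟨j, hj⟩ := h2
  exact ⟨k + j, by rw [Function.iterate_add_apply, hj, hk]⟩

lemma iterate_congr {p q : V → V} {z : V} {k : ℕ}
    (h : ∀ j < k, q (p^[j] z) = p (p^[j] z)) : ∀ j ≤ k, q^[j] z = p^[j] z := by
  intro j hj
  induction j with
  | zero => rfl
  | succ j ih =>
    rw [Function.iterate_succ_apply', Function.iterate_succ_apply',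
      ih (le_of_lt hj)]
    exact h j hj

lemma support_eq_map_getVert {a b : V} (w : G.Walk a b) :
    w.support = (List.range (w.length + 1)).map w.getVert := by
  induction w with
  | nil => simp [Walk.getVert]
  | cons h t ih =>
    rw [Walk.support_cons, ih, Walk.length_cons]
    conv_rhs => rw [List.range_succ_eq_map]
    simp only [List.map_cons, List.map_map, Walk.getVert_zero, List.cons.injEq, true_and]
    apply List.map_congr_left
    intro i _
    simp [Function.comp, Walk.getVert_cons_succ]

lemma getVert_inj {a b : V} {w : G.Walk a b} (hw : w.support.Nodup) {i j : ℕ}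
    (hi : i ≤ w.length) (hj : j ≤ w.length) (h : w.getVert i = w.getVert j) : i = j := by
  rw [support_eq_map_getVert] at hw
  exact List.inj_on_of_nodup_map hw (List.mem_range.2 (by omega)) (List.mem_range.2 (by omega)) h

lemma getVert_mem_support' {a b : V} (w : G.Walk a b) {i : ℕ} (hi : i ≤ w.length) :
    w.getVert i ∈ w.support :=
  Walk.mem_support_iff_exists_getVert.2 ⟨i, rfl, hi⟩

/-- update a parent function along a walk: each vertex of the support after the first
gets the preceding vertex as parent. -/
def updP : {a b : V} → G.Walk a b → (V → V) → V → V
  | _, _, Walk.nil, p => p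
  | a, _, Walk.cons (v := c) _ t, p => fun z => if z = c then a else updP t p z

/-- update a depth function along a walk: the `i`-th vertex of the support gets depth `n + i`. -/
def updD : {a b : V} → G.Walk a b → (V → ℕ) → ℕ → V → ℕ
  | a, _, Walk.nil, d, n => fun z => if z = a then n else d z
  | a, _, Walk.cons _ t, d, n => fun z => if z = a then n else updD t d (n + 1) z

lemma updP_not_mem {a b : V} (w : G.Walk a b) (p : V → V) {z : V}
    (hz : z ∉ w.support.tail) : updP w p z = p z := by
  induction w with
  | nil => rfl
  | cons h t ih =>
    simp only [Walk.support_cons, List.tail_cons] at hz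
    have hz1 : z ∉ t.support.tail := fun hmem => hz (List.mem_of_mem_tail hmem)
    have hz2 : z ≠ _ := fun he => hz (he ▸ t.start_mem_support)
    simp only [updP, if_neg hz2]
    exact ih hz1

lemma updD_not_mem {a b : V} (w : G.Walk a b) (d : V → ℕ) (n : ℕ) {z : V}
    (hz : z ∉ w.support) : updD w d n z = d z := by
  induction w generalizing n with
  | nil =>
    simp only [Walk.support_nil, List.mem_singleton] at hz
    simp [updD, hz]
  | cons h t ih =>
    simp only [Walk.support_cons, List.mem_cons, not_or] at hz
    simp only [updD, if_neg hz.1]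
    exact ih _ hz.2

lemma updP_getVert {a b : V} (w : G.Walk a b) (p : V → V) (hw : w.support.Nodup)
    {i : ℕ} (hi : i < w.length) : updP w p (w.getVert (i + 1)) = w.getVert i := by
  induction w generalizing i with
  | nil => simp at hi
  | cons h t ih =>
    have hnd : t.support.Nodup := by
      rw [Walk.support_cons] at hw; exact hw.of_cons
    rw [Walk.length_cons] at hi
    match i with
    | 0 =>
      have : (Walk.cons h t).getVert 1 = t.getVert 0 := Walk.getVert_cons_succ _ _
      rw [this, Walk.getVert_zero]
      simp [updP, Walk.getVert_zero]
    | (i + 1) =>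
      have hi' : i < t.length := by omega
      have h1 : (Walk.cons h t).getVert (i + 1 + 1) = t.getVert (i + 1) :=
        Walk.getVert_cons_succ _ _
      have h2 : (Walk.cons h t).getVert (i + 1) = t.getVert i := Walk.getVert_cons_succ _ _
      rw [h1, h2]
      have hne : t.getVert (i + 1) ≠ t.getVert 0 := by
        intro hcon
        have := getVert_inj hnd (by omega) (by omega : 0 ≤ t.length) hcon
        omega
      rw [Walk.getVert_zero] at hne
      simp only [updP, if_neg hne]
      exact ih hnd hi'

lemma updD_getVert {a b : V} (w : G.Walk a b) (d : V → ℕ) (n : ℕ) (hw : w.support.Nodup)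
    {i : ℕ} (hi : i ≤ w.length) : updD w d n (w.getVert i) = n + i := by
  induction w generalizing i n with
  | nil =>
    simp only [Walk.length_nil, Nat.le_zero] at hi
    subst hi
    simp [updD, Walk.getVert_zero]
  | @cons u c b' h t ih =>
    have hnd : t.support.Nodup := by
      rw [Walk.support_cons] at hw; exact hw.of_cons
    have hmem : u ∉ t.support := by
      rw [Walk.support_cons] at hw; exact (List.nodup_cons.1 hw).1
    rw [Walk.length_cons] at hi
    match i with
    | 0 =>
      rw [Walk.getVert_zero]
      simp [updD]
    | (i + 1) =>
      have h1 : (Walk.cons h t).getVert (i + 1) = t.getVert i := Walk.getVert_cons_succ _ _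
      rw [h1]
      have hne : t.getVert i ≠ u := by
        intro hcon
        exact hmem (hcon ▸ getVert_mem_support' t (by omega))
      simp only [updD, if_neg hne]
      rw [ih (n+1) hnd (by omega)]
      omega

lemma updP_iterate {a b : V} (w : G.Walk a b) (p : V → V) (hw : w.support.Nodup)
    {i j : ℕ} (hj : j ≤ i) (hi : i ≤ w.length) :
    (updP w p)^[j] (w.getVert i) = w.getVert (i - j) := by
  induction j with
  | zero => simp
  | succ j ih =>
    rw [Function.iterate_succ_apply', ih (by omega)]
    have : i - j = (i - (j + 1)) + 1 := by omega
    rw [this, updP_getVert w p hw (by omega)]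

lemma updP_anc_start {a b : V} (w : G.Walk a b) (p : V → V) (hw : w.support.Nodup)
    {z : V} (hz : z ∈ w.support) : Anc (updP w p) a z := by
  obtain ⟨i, hiz, hi⟩ := Walk.mem_support_iff_exists_getVert.1 hz
  subst hiz
  exact ⟨i, by rw [updP_iterate w p hw le_rfl hi]; simp [Walk.getVert_zero]⟩

lemma updP_comparable {a b : V} (w : G.Walk a b) (p : V → V) (hw : w.support.Nodup)
    {z z' : V} (hz : z ∈ w.support) (hz' : z' ∈ w.support) :
    Anc (updP w p) z z' ∨ Anc (updP w p) z' z := by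
  obtain ⟨i, hiz, hi⟩ := Walk.mem_support_iff_exists_getVert.1 hz
  obtain ⟨i', hiz', hi'⟩ := Walk.mem_support_iff_exists_getVert.1 hz'
  subst hiz; subst hiz'
  rcases le_total i i' with hle | hle
  · exact Or.inl ⟨i' - i, by rw [updP_iterate w p hw (by omega) hi']; congr 1; omega⟩
  · exact Or.inr ⟨i - i', by rw [updP_iterate w p hw (by omega) hi]; congr 1; omega⟩

/-- A finite partial normal tree in `G` rooted at `r`. -/
structure PT (G : SimpleGraph V) (r : V) where
  D : Finset V
  p : V → V
  d : V → ℕ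
  hr : r ∈ D
  hpr : p r = r
  hdr : d r = 0
  hp : ∀ v ∈ D, v ≠ r → p v ∈ D ∧ G.Adj (p v) v ∧ d v = d (p v) + 1
  normal : ∀ a ∈ D, ∀ b ∈ D, ∀ w : G.Walk a b,
    (∀ z ∈ w.support, z ≠ a → z ≠ b → z ∉ D) → Anc p a b ∨ Anc p b a

namespace PT

variable {r : V} (T : PT G r)

lemma iter_mem {v : V} (hv : v ∈ T.D) (k : ℕ) : T.p^[k] v ∈ T.D := by
  induction k with
  | zero => exact hv
  | succ k ih =>
    rw [Function.iterate_succ_apply']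
    by_cases h : T.p^[k] v = r
    · rw [h, T.hpr]; exact T.hr
    · exact (T.hp _ ih h).1

lemma iter_d {v : V} (hv : v ∈ T.D) (k : ℕ) :
    T.d (T.p^[k] v) ≤ T.d v ∧ (T.p^[k] v ≠ v → T.d (T.p^[k] v) < T.d v) := by
  induction k with
  | zero => exact ⟨le_rfl, fun h => absurd rfl h⟩
  | succ k ih =>
    have hmem : T.p^[k] v ∈ T.D := T.iter_mem hv k
    rw [Function.iterate_succ_apply']
    by_cases h : T.p^[k] v = r
    · rw [h] at ih
      rw [h, T.hpr]
      exact ih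
    · have := (T.hp _ hmem h).2.2
      constructor
      · omega
      · intro _; omega

lemma anc_antisymm {a b : V} (hb : b ∈ T.D) (h1 : Anc T.p a b) (h2 : Anc T.p b a) :
    a = b := by
  by_contra hne
  obtain ⟨k, hk⟩ := h1
  obtain ⟨j, hj⟩ := h2
  have ha : a ∈ T.D := hk ▸ T.iter_mem hb k
  have h1' := (T.iter_d hb k).2 (by rw [hk]; exact hne)
  have h2' := (T.iter_d ha j).2 (by rw [hj]; exact fun h => hne h.symm)
  rw [hk] at h1'
  rw [hj] at h2'
  omega

lemma anc_transfer {q : V → V} (hq : ∀ z ∈ T.D, q z = T.p z) {a b : V} (hb : b ∈ T.D)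
    (h : Anc T.p a b) : Anc q a b := by
  obtain ⟨k, hk⟩ := h
  refine ⟨k, ?_⟩
  rw [iterate_congr (p := T.p) (fun j _ => hq _ (T.iter_mem hb j)) k le_rfl]
  exact hk

end PT

/-- the trivial partial tree -/
def base (G : SimpleGraph V) (r : V) : PT G r where
  D := {r}
  p := id
  d := fun _ => 0
  hr := Finset.mem_singleton_self r
  hpr := rfl
  hdr := rfl
  hp := by intro v hv hvr; exact absurd (Finset.mem_singleton.1 hv) hvr
  normal := by
    intro a ha b hb w _
    rw [Finset.mem_singleton] at ha hb
    subst ha; subst hb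
    exact Or.inl (anc_refl _ _)

lemma entry_aux {r : V} (T : PT G r) : ∀ {x : V} (_ : G.Walk x r), x ∉ T.D →
    ∃ a ∈ T.D, ∃ q : G.Walk a x, ∀ z ∈ q.support, z ≠ a → z ∉ T.D := by
  intro x w
  induction w with
  | nil => intro hx; exact absurd T.hr hx
  | @cons x y r' h t ih =>
    intro hx
    by_cases hy : y ∈ T.D
    · refine ⟨y, hy, Walk.cons h.symm Walk.nil, ?_⟩
      intro z hz hza
      simp only [Walk.support_cons, Walk.support_nil, List.mem_cons, List.mem_singleton] at hz
      rcases hz with rfl | rfl | hz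
      · exact absurd rfl hza
      · exact hx
      · exact absurd hz List.not_mem_nil
    · obtain ⟨a, ha, q, hq⟩ := ih T hy
      refine ⟨a, ha, q.append (Walk.cons h.symm Walk.nil), ?_⟩
      intro z hz hza
      rw [Walk.support_append] at hz
      rcases List.mem_append.1 hz with hz | hz
      · exact hq z hz hza
      · simp only [Walk.support_cons, Walk.support_nil, List.tail_cons,
          List.mem_singleton] at hz
        subst hz; exact hx

lemma extend {r : V} (hG : G.Connected) (T : PT G r) (v : V) :
    ∃ T' : PT G r, T.D ⊆ T'.D ∧ v ∈ T'.D ∧ ∀ x ∈ T.D, T'.p x = T.p x ∧ T'.d x = T.d x := by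
  classical
  by_cases hv : v ∈ T.D
  · exact ⟨T, subset_rfl, hv, fun x _ => ⟨rfl, rfl⟩⟩
  let Scond : V → Prop := fun a => ∃ w : G.Walk a v, ∀ z ∈ w.support, z ≠ a → z ∉ T.D
  let S : Finset V := T.D.filter Scond
  have hS_mem : ∀ a : V, a ∈ S ↔ a ∈ T.D ∧ Scond a := fun a => Finset.mem_filter
  have hSne : S.Nonempty := by
    obtain ⟨a, ha, q, hq⟩ := entry_aux T ((hG.preconnected v r).some) hv
    exact ⟨a, (hS_mem a).2 ⟨ha, ⟨q, hq⟩⟩⟩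
  have hchain : ∀ a ∈ S, ∀ b ∈ S, Anc T.p a b ∨ Anc T.p b a := by
    intro a ha b hb
    obtain ⟨haD, wa, hwa⟩ := (hS_mem a).1 ha
    obtain ⟨hbD, wb, hwb⟩ := (hS_mem b).1 hb
    refine T.normal a haD b hbD (wa.append wb.reverse) ?_
    intro z hz hza hzb
    rw [Walk.support_append] at hz
    rcases List.mem_append.1 hz with hz | hz
    · exact hwa z hz hza
    · refine hwb z ?_ hzb
      have h2 := List.mem_of_mem_tail hz
      rw [Walk.support_reverse] at h2
      exact List.mem_reverse.1 h2
  obtain ⟨x, hxS, hxmax⟩ := S.exists_max_image T.d hSne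
  have hxD : x ∈ T.D := ((hS_mem x).1 hxS).1
  have hxanc : ∀ a ∈ S, Anc T.p a x := by
    intro a ha
    rcases hchain a ha x hxS with h | h
    · exact h
    · have haD : a ∈ T.D := ((hS_mem a).1 ha).1
      obtain ⟨k, hk⟩ := h
      by_cases hxa : x = a
      · subst hxa; exact anc_refl _ _
      · exfalso
        have h1 := (T.iter_d haD k).2 (by rw [hk]; exact hxa)
        rw [hk] at h1
        have h2 := hxmax a ha
        omega
  obtain ⟨w0, hw0⟩ := ((hS_mem x).1 hxS).2
  set q : G.Walk x v := w0.bypass with hqdef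
  have hqpath : q.IsPath := w0.bypass_isPath
  have hnd : q.support.Nodup := hqpath.support_nodup
  have hqD : ∀ z ∈ q.support, z ≠ x → z ∉ T.D := fun z hz =>
    hw0 z (w0.support_bypass_subset hz)
  set DD : Finset V := T.D ∪ q.support.toFinset with hDDdef
  set p' : V → V := updP q T.p with hp'def
  set d' : V → ℕ := updD q T.d (T.d x) with hd'def
  have htail : ∀ z ∈ q.support.tail, z ∉ T.D := by
    intro z hz
    have hzs : z ∈ q.support := List.mem_of_mem_tail hz
    have hzx : z ≠ x := by
      rintro rfl
      rw [q.support_eq_cons] at hnd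
      exact (List.nodup_cons.1 hnd).1 hz
    exact hqD z hzs hzx
  have hpD : ∀ z ∈ T.D, p' z = T.p z := fun z hz =>
    updP_not_mem q T.p (fun hzt => htail z hzt hz)
  have hdx : d' x = T.d x := by
    have h0 := updD_getVert q T.d (T.d x) hnd (Nat.zero_le _)
    rw [Walk.getVert_zero] at h0
    simpa using h0
  have hdD : ∀ z ∈ T.D, d' z = T.d z := by
    intro z hz
    by_cases hzx : z = x
    · subst hzx; exact hdx
    · exact updD_not_mem q T.d (T.d x) (fun hmem => (hqD z hmem hzx) hz)
  have hxdrop : ∀ (b : V) (hb : b ∈ q.support), x ∉ (q.dropUntil b hb).support.tail := by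
    intro b hb hmem
    have hsplit : q.support = (q.takeUntil b hb).support ++ (q.dropUntil b hb).support.tail := by
      conv_lhs => rw [← q.take_spec hb]
      rw [Walk.support_append]
    rw [hsplit] at hnd
    exact (List.disjoint_of_nodup_append hnd) (Walk.start_mem_support _) hmem
  have hmemS : ∀ a ∈ T.D, ∀ (b : V) (hb : b ∈ q.support), b ∉ T.D → ∀ w : G.Walk a b,
      (∀ z ∈ w.support, z ≠ a → z ≠ b → z ∉ T.D) → a ∈ S := by
    intro a haD b hb hbD w hw
    refine (hS_mem a).2 ⟨haD, w.append (q.dropUntil b hb), ?_⟩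
    intro z hz hza
    rw [Walk.support_append] at hz
    rcases List.mem_append.1 hz with hz | hz
    · by_cases hzb : z = b
      · subst hzb; exact hbD
      · exact hw z hz hza hzb
    · have hzq : z ∈ q.support := Walk.support_dropUntil_subset q hb (List.mem_of_mem_tail hz)
      have hzx : z ≠ x := fun h => hxdrop b hb (h ▸ hz)
      exact hqD z hzq hzx
  have hmemq : ∀ z ∈ DD, z ∉ T.D → z ∈ q.support := by
    intro z hz hzD
    rcases Finset.mem_union.1 hz with h | h
    · exact absurd h hzD
    · exact List.mem_toFinset.1 h
  refine ⟨⟨DD, p', d', Finset.mem_union_left _ T.hr, (hpD r T.hr).trans T.hpr,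
    (hdD r T.hr).trans T.hdr, ?_, ?_⟩, Finset.subset_union_left, ?_, fun z hz => ⟨hpD z hz, hdD z hz⟩⟩
  · -- hp
    intro z hz hzr
    by_cases hzD : z ∈ T.D
    · obtain ⟨h1, h2, h3⟩ := T.hp z hzD hzr
      rw [hpD z hzD, hdD z hzD, hdD _ h1]
      exact ⟨Finset.mem_union_left _ h1, h2, h3⟩
    · have hzq : z ∈ q.support := hmemq z hz hzD
      obtain ⟨i, hiz, hi⟩ := Walk.mem_support_iff_exists_getVert.1 hzq
      have hi0 : i ≠ 0 := by
        rintro rfl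
        rw [Walk.getVert_zero] at hiz
        exact hzD (hiz ▸ hxD)
      obtain ⟨j, rfl⟩ : ∃ j, i = j + 1 := ⟨i - 1, by omega⟩
      subst hiz
      have hj : j < q.length := by omega
      have e1 : p' (q.getVert (j + 1)) = q.getVert j := updP_getVert q T.p hnd hj
      refine ⟨?_, ?_, ?_⟩
      · rw [e1]
        exact Finset.mem_union_right _ (List.mem_toFinset.2 (getVert_mem_support' q (by omega)))
      · rw [e1]; exact q.adj_getVert_succ hj
      · rw [e1, hd'def, updD_getVert q T.d (T.d x) hnd hi,
          updD_getVert q T.d (T.d x) hnd (by omega : j ≤ q.length)]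
        omega
  · -- normal
    intro a ha b hb w hw
    have hwD : ∀ z ∈ w.support, z ≠ a → z ≠ b → z ∉ T.D := by
      intro z hz hza hzb hzD
      exact hw z hz hza hzb (Finset.mem_union_left _ hzD)
    by_cases haD : a ∈ T.D <;> by_cases hbD : b ∈ T.D
    · rcases T.normal a haD b hbD w hwD with h | h
      · exact Or.inl (T.anc_transfer hpD hbD h)
      · exact Or.inr (T.anc_transfer hpD haD h)
    · have hbq : b ∈ q.support := hmemq b hb hbD
      left
      have haS : a ∈ S := hmemS a haD b hbq hbD w hwD
      exact anc_trans (T.anc_transfer hpD hxD (hxanc a haS)) (updP_anc_start q T.p hnd hbq)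
    · have haq : a ∈ q.support := hmemq a ha haD
      right
      have hwD' : ∀ z ∈ w.reverse.support, z ≠ b → z ≠ a → z ∉ T.D := by
        intro z hz hzb hza
        rw [Walk.support_reverse] at hz
        exact hwD z (List.mem_reverse.1 hz) hza hzb
      have hbS : b ∈ S := hmemS b hbD a haq haD w.reverse hwD'
      exact anc_trans (T.anc_transfer hpD hxD (hxanc b hbS)) (updP_anc_start q T.p hnd haq)
    · exact updP_comparable q T.p hnd (hmemq a ha haD) (hmemq b hb hbD)
  · exact Finset.mem_union_right _ (List.mem_toFinset.2 q.end_mem_support)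

lemma exists_parent [Countable V] (hG : G.Connected) :
    ∃ (r : V) (P : V → V) (dP : V → ℕ),
      P r = r ∧ (∀ v, v ≠ r → G.Adj (P v) v ∧ dP v = dP (P v) + 1) ∧
      (∀ x y, G.Adj x y → Anc P x y ∨ Anc P y x) := by
  classical
  have hne : Nonempty V := hG.nonempty
  obtain ⟨e, he⟩ := exists_surjective_nat V
  set r := e 0 with hrdef
  let g : ℕ → PT G r := fun n => Nat.rec (base G r) (fun n T => (extend hG T (e n)).choose) n
  have hspec : ∀ n, (g n).D ⊆ (g (n + 1)).D ∧ e n ∈ (g (n + 1)).D ∧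
      ∀ x ∈ (g n).D, (g (n + 1)).p x = (g n).p x ∧ (g (n + 1)).d x = (g n).d x := fun n =>
    (extend hG (g n) (e n)).choose_spec
  have hmono : ∀ n m, n ≤ m → (g n).D ⊆ (g m).D ∧
      ∀ x ∈ (g n).D, (g m).p x = (g n).p x ∧ (g m).d x = (g n).d x := by
    intro n m hnm
    induction m, hnm using Nat.le_induction with
    | base => exact ⟨subset_rfl, fun x _ => ⟨rfl, rfl⟩⟩
    | succ m hm ih =>
      refine ⟨ih.1.trans (hspec m).1, fun x hx => ?_⟩
      obtain ⟨h1, h2⟩ := ih.2 x hx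
      obtain ⟨h1', h2'⟩ := (hspec m).2.2 x (ih.1 hx)
      exact ⟨h1'.trans h1, h2'.trans h2⟩
  have hstage : ∀ v : V, ∃ n, v ∈ (g n).D := by
    intro v
    obtain ⟨n, rfl⟩ := he v
    exact ⟨n + 1, (hspec n).2.1⟩
  let st : V → ℕ := fun v => (hstage v).choose
  have hst : ∀ v, v ∈ (g (st v)).D := fun v => (hstage v).choose_spec
  let P : V → V := fun v => (g (st v)).p v
  let dP : V → ℕ := fun v => (g (st v)).d v
  have hstable : ∀ n, ∀ v ∈ (g n).D, (g n).p v = P v ∧ (g n).d v = dP v := by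
    intro n v hv
    obtain ⟨h1, h2⟩ := (hmono n (max n (st v)) (le_max_left _ _)).2 v hv
    obtain ⟨h1', h2'⟩ := (hmono (st v) (max n (st v)) (le_max_right _ _)).2 v (hst v)
    exact ⟨h1.symm.trans h1', h2.symm.trans h2'⟩
  refine ⟨r, P, dP, ?_, ?_, ?_⟩
  · show (g (st r)).p r = r
    exact (g (st r)).hpr
  · intro v hvr
    obtain ⟨h1, h2, h3⟩ := (g (st v)).hp v (hst v) hvr
    refine ⟨h2, ?_⟩
    show (g (st v)).d v = dP (P v) + 1
    rw [h3, (hstable (st v) ((g (st v)).p v) h1).2]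
  · intro x y hxy
    set n := max (st x) (st y) with hndef
    have hx : x ∈ (g n).D := (hmono (st x) n (le_max_left _ _)).1 (hst x)
    have hy : y ∈ (g n).D := (hmono (st y) n (le_max_right _ _)).1 (hst y)
    have hcond : ∀ z ∈ hxy.toWalk.support, z ≠ x → z ≠ y → z ∉ (g n).D := by
      intro z hz hzx hzy
      simp only [Adj.toWalk, Walk.support_cons, Walk.support_nil, List.mem_cons,
        List.mem_singleton] at hz
      rcases hz with rfl | rfl | hz
      · exact absurd rfl hzx
      · exact absurd rfl hzy
      · exact absurd hz List.not_mem_nil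
    have htr : ∀ z ∈ (g n).D, P z = (g n).p z := fun z hz => ((hstable n z hz).1).symm
    rcases (g n).normal x hx y hy hxy.toWalk hcond with h | h
    · exact Or.inl ((g n).anc_transfer htr hy h)
    · exact Or.inr ((g n).anc_transfer htr hx h)

lemma anc_mem_support {T : SimpleGraph V} {P : V → V} {r : V} (hPr : P r = r)
    (hT : ∀ a b, T.Adj a b → (P a = b ∨ P b = a)) :
    ∀ {a c : V} (w : T.Walk a c), c = r → ∀ k, P^[k] a ∈ w.support := by
  intro a c w
  induction w with
  | nil =>
    rintro rfl k
    rw [Function.iterate_fixed hPr]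
    simp
  | @cons a b c h t ih =>
    rintro rfl k
    match k with
    | 0 => simp
    | (k + 1) =>
      rw [Walk.support_cons]
      rcases hT a b h with hPa | hPb
      · rw [Function.iterate_succ_apply, hPa]
        exact List.mem_cons_of_mem _ (ih rfl k)
      · rw [← hPb, ← Function.iterate_succ_apply]
        exact List.mem_cons_of_mem _ (ih rfl (k + 1 + 1))

lemma acyclic_aux {T : SimpleGraph V} {P : V → V} {dP : V → ℕ} {r : V}
    (hT : ∀ a b, T.Adj a b → ((a ≠ r ∧ P a = b) ∨ (b ≠ r ∧ P b = a)))
    (hd : ∀ v, v ≠ r → dP v = dP (P v) + 1) : T.IsAcyclic := by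
  classical
  intro v c hc
  obtain ⟨u, hus, humax⟩ := c.support.toFinset.exists_max_image dP
    ⟨v, List.mem_toFinset.2 c.start_mem_support⟩
  have hu : u ∈ c.support := List.mem_toFinset.1 hus
  have hc' := hc.rotate hu
  have hsup : ∀ z ∈ (c.rotate u hu).support, dP z ≤ dP u := by
    intro z hz
    refine humax z (List.mem_toFinset.2 ?_)
    rw [(c.rotate u hu).support_eq_cons] at hz
    rcases List.mem_cons.1 hz with rfl | hz
    · exact hu
    · exact List.mem_of_mem_tail (((c.support_rotate u hu).mem_iff).1 hz)
  have hnn : ¬ (c.rotate u hu).Nil := hc'.not_nil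
  obtain ⟨b, hadj, q, hceq⟩ := Walk.not_nil_iff.1 hnn
  rw [hceq] at hc' hsup
  rw [Walk.cons_isCycle_iff] at hc'
  obtain ⟨hqp, hne⟩ := hc'
  have hstep : ∀ z ∈ (Walk.cons hadj q).support, T.Adj u z → P u = z := by
    intro z hz hadjz
    rcases hT u z hadjz with ⟨_, h2⟩ | ⟨h1, h2⟩
    · exact h2
    · exfalso
      have hd1 := hd z h1
      rw [h2] at hd1
      have := hsup z hz
      omega
  have hb : P u = b := by
    refine hstep b ?_ hadj
    rw [Walk.support_cons]
    exact List.mem_cons_of_mem _ q.start_mem_support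
  have hnn2 : ¬ q.reverse.Nil := Walk.not_nil_of_ne hadj.ne
  obtain ⟨z, hadj2, q2, hq2⟩ := Walk.not_nil_iff.1 hnn2
  have hzq : z ∈ q.support := by
    have : z ∈ q.reverse.support := by
      rw [hq2, Walk.support_cons]
      exact List.mem_cons_of_mem _ q2.start_mem_support
    rw [Walk.support_reverse] at this
    exact List.mem_reverse.1 this
  have hz : P u = z := by
    refine hstep z ?_ hadj2
    rw [Walk.support_cons]
    exact List.mem_cons_of_mem _ hzq
  have hzb : z = b := by rw [← hz, hb]
  have hedge : s(u, z) ∈ q.reverse.edges := by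
    rw [hq2, Walk.edges_cons]
    exact List.mem_cons_self
  rw [Walk.edges_reverse, hzb] at hedge
  exact hne (List.mem_reverse.1 hedge)

end NST

open NST SimpleGraph in
theorem nst_main {V : Type u} [Countable V] (G : SimpleGraph V) (hG : G.Connected) :
    ∃ (T : SimpleGraph V) (r : V), IsNormalSpanningTree G T r := by
  classical
  obtain ⟨r, P, dP, hPr, hPv, hnorm⟩ := exists_parent hG
  have hdPr : ∀ a, a ≠ r → P a ≠ a := by
    intro a ha hpa
    have := (hPv a ha).2
    rw [hpa] at this
    omega
  let T : SimpleGraph V :=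
    { Adj := fun a b => (a ≠ r ∧ P a = b) ∨ (b ≠ r ∧ P b = a)
      symm := ⟨by intro a b h; tauto⟩
      loopless := ⟨by
        intro a h
        rcases h with ⟨ha, hpa⟩ | ⟨ha, hpa⟩ <;> exact hdPr a ha hpa⟩ }
  have hTadj : ∀ a b : V, T.Adj a b ↔ ((a ≠ r ∧ P a = b) ∨ (b ≠ r ∧ P b = a)) :=
    fun a b => Iff.rfl
  have hTle : T ≤ G := by
    intro a b h
    rcases h with ⟨ha, hpa⟩ | ⟨hb, hpb⟩
    · exact hpa ▸ ((hPv a ha).1).symm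
    · exact hpb ▸ (hPv b hb).1
  have reach : ∀ v, T.Reachable v r := by
    have key : ∀ n v, dP v ≤ n → T.Reachable v r := by
      intro n
      induction n with
      | zero =>
        intro v hv
        by_cases hvr : v = r
        · subst hvr; rfl
        · have := (hPv v hvr).2; omega
      | succ n ih =>
        intro v hv
        by_cases hvr : v = r
        · subst hvr; rfl
        · have hadj : T.Adj v (P v) := Or.inl ⟨hvr, rfl⟩
          have := (hPv v hvr).2
          exact hadj.reachable.trans (ih (P v) (by omega))
    exact fun v => key (dP v) v le_rfl
  haveI : Nonempty V := hG.nonempty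
  have hconn : T.Connected := ⟨fun u v => (reach u).trans (reach v).symm⟩
  have hacyc : T.IsAcyclic :=
    acyclic_aux (T := T) (P := P) (dP := dP) (r := r) (fun a b h => h)
      (fun v hv => (hPv v hv).2)
  have htree : T.IsTree := ⟨hconn, hacyc⟩
  have hanc : ∀ x y : V, Anc P x y → treeLE T r x y := by
    intro x y h pth _
    obtain ⟨k, hk⟩ := h
    have hm := anc_mem_support hPr
      (fun a b hab => by
        rcases hab with ⟨_, h2⟩ | ⟨_, h2⟩
        · exact Or.inl h2
        · exact Or.inr h2) pth.reverse rfl k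
    rw [hk, Walk.support_reverse] at hm
    exact List.mem_reverse.1 hm
  refine ⟨T, r, htree, hTle, ?_⟩
  intro x y hxy
  rcases hnorm x y hxy with h | h
  · exact Or.inl (hanc x y h)
  · exact Or.inr (hanc y x h)

/-- Every countable connected graph has a normal spanning tree. -/
theorem stmt15 {V : Type u} [Countable V] (G : SimpleGraph V) (hG : G.Connected) :
    ∃ (T : SimpleGraph V) (r : V), IsNormalSpanningTree G T r := by
  exact nst_main G hG
end

section
/- Let T be a normal spanning tree of a connected graph G with root r. Then every level of T (the set of vertices at a fixed tree-distance from r) is a dispersed set of vertices of G. -/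
universe u v

section NSTAux
set_option linter.unusedSectionVars false
open SimpleGraph
variable {V : Type*} {T : SimpleGraph V} [DecidableEq V]

noncomputable def pth (hT : T.IsTree) (r v : V) : T.Walk r v :=
  ((hT.existsUnique_path r v).exists).choose
lemma pth_isPath (hT : T.IsTree) (r v : V) : (pth hT r v).IsPath :=
  ((hT.existsUnique_path r v).exists).choose_spec
lemma pth_unique (hT : T.IsTree) {r v : V} (p : T.Walk r v) (hp : p.IsPath) :
    p = pth hT r v :=
  (hT.existsUnique_path r v).unique hp (pth_isPath hT r v)
lemma takeUntil_pth (hT : T.IsTree) {r x y : V} (hx : x ∈ (pth hT r y).support) :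
    (pth hT r y).takeUntil x hx = pth hT r x :=
  pth_unique hT _ ((pth_isPath hT r y).takeUntil hx)
lemma pthTrans (hT : T.IsTree) {r x y z : V} (hx : x ∈ (pth hT r y).support)
    (hy : y ∈ (pth hT r z).support) : x ∈ (pth hT r z).support := by
  rw [← takeUntil_pth hT hy] at hx
  exact Walk.support_takeUntil_subset _ _ hx
lemma length_lt' (hT : T.IsTree) {r x y : V} (hx : x ∈ (pth hT r y).support) (hne : x ≠ y) :
    (pth hT r x).length < (pth hT r y).length := by
  have hlen : ((pth hT r y).takeUntil x hx).length + ((pth hT r y).dropUntil x hx).length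
      = (pth hT r y).length := by
    rw [← Walk.length_append, (pth hT r y).take_spec hx]
  rw [takeUntil_pth hT hx] at hlen
  have hd : ((pth hT r y).dropUntil x hx).length ≠ 0 :=
    fun h0 => hne (Walk.eq_of_length_eq_zero h0)
  omega
lemma dist_eq_length' (hT : T.IsTree) (r v : V) : T.dist r v = (pth hT r v).length := by
  obtain ⟨p, hp, hl⟩ := (hT.isConnected.preconnected r v).exists_path_of_dist
  rw [pth_unique hT p hp] at hl
  exact hl.symm
lemma mem_chain' (hT : T.IsTree) {r x1 x2 y : V} (h1 : x1 ∈ (pth hT r y).support)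
    (h2 : x2 ∈ (pth hT r y).support) :
    x1 ∈ (pth hT r x2).support ∨ x2 ∈ (pth hT r x1).support := by
  set q := pth hT r y with hqdef
  have h1' : x1 ∈ (q.takeUntil x2 h2).support ∨ x1 ∈ (q.dropUntil x2 h2).support := by
    rw [← Walk.mem_support_append_iff, q.take_spec h2]; exact h1
  rcases h1' with hcase | hcase
  · left; rw [← takeUntil_pth hT h2]; exact hcase
  · right
    set A := q.takeUntil x2 h2 with hA
    set B := q.dropUntil x2 h2 with hB
    set w := A.append (B.takeUntil x1 hcase) with hw
    have hBt : B.support.tail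
        = (B.takeUntil x1 hcase).support.tail ++ (B.dropUntil x1 hcase).support.tail := by
      conv_lhs => rw [← B.take_spec hcase]
      rw [Walk.support_append, List.tail_append_of_ne_nil (Walk.support_ne_nil _)]
    have hq' : q.support = w.support ++ (B.dropUntil x1 hcase).support.tail := by
      conv_lhs => rw [← q.take_spec h2]
      rw [Walk.support_append, hBt, hw, Walk.support_append, List.append_assoc]
    have hwpath : w.IsPath := by
      rw [Walk.isPath_def]
      have hq : q.support.Nodup := (pth_isPath hT r y).support_nodup
      rw [hq'] at hq
      exact (List.sublist_append_left _ _).nodup hq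
    rw [← pth_unique hT w hwpath]
    exact (Walk.mem_support_append_iff _ _).mpr (Or.inl A.end_mem_support)

lemma exists_snd' {t v : V} (d : T.Walk t v) (hne : t ≠ v) :
    ∃ (s : V) (hadj : T.Adj t s) (d' : T.Walk s v), d = Walk.cons hadj d' := by
  cases d with
  | nil => exact absurd rfl hne
  | cons h p => exact ⟨_, h, p, rfl⟩

lemma child_exists (hT : T.IsTree) {r t v : V} (htv : t ∈ (pth hT r v).support)
    (hne : t ≠ v) :
    ∃ s, T.Adj t s ∧ t ∈ (pth hT r s).support ∧ s ∈ (pth hT r v).support := by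
  set q := pth hT r v with hqdef
  obtain ⟨s, hadj, d', hd⟩ := exists_snd' (q.dropUntil t htv) hne
  have hs_tail : s ∈ (q.dropUntil t htv).support.tail := by
    rw [hd, Walk.support_cons]
    exact d'.start_mem_support
  have hsq : s ∈ q.support := q.support_dropUntil_subset htv (List.mem_of_mem_tail hs_tail)
  have hst : s ∉ (q.takeUntil t htv).support := by
    have hq : ((q.takeUntil t htv).support ++ (q.dropUntil t htv).support.tail).Nodup := by
      rw [← Walk.support_append, q.take_spec htv]
      exact (pth_isPath hT r v).support_nodup
    intro hmem
    exact List.disjoint_of_nodup_append hq hmem hs_tail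
  have hts : t ∈ (pth hT r s).support := by
    rcases mem_chain' hT htv hsq with hc | hc
    · exact hc
    · rw [← takeUntil_pth hT htv] at hc
      exact absurd hc hst
  exact ⟨s, hadj, hts, hsq⟩

lemma child_unique_half (hT : T.IsTree) {r t s s' : V} (hadj : T.Adj t s)
    (hts : t ∈ (pth hT r s).support) (hadj' : T.Adj t s')
    (hss' : s ∈ (pth hT r s').support) : s = s' := by
  by_contra hne
  set p1 : T.Walk t s' := Walk.cons hadj' Walk.nil with hp1def
  have hp1 : p1.IsPath := by
    simp [hp1def, Walk.isPath_def, hadj'.ne]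
  have hts' : t ∈ (pth hT r s').support := pthTrans hT hts hss'
  set p2 := (pth hT r s').dropUntil t hts' with hp2def
  have hp2 : p2.IsPath := (pth_isPath hT r s').dropUntil hts'
  have hpeq : p1 = p2 := (hT.existsUnique_path t s').unique hp1 hp2
  have hs2 : s ∈ p2.support := by
    have hsplit : s ∈ ((pth hT r s').takeUntil t hts').support ∨ s ∈ p2.support := by
      rw [← Walk.mem_support_append_iff, (pth hT r s').take_spec hts']
      exact hss'
    rcases hsplit with hc | hc
    · exfalso
      rw [takeUntil_pth hT hts'] at hc
      have h1 := length_lt' hT hc hadj.ne.symm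
      have h2 := length_lt' hT hts hadj.ne
      omega
    · exact hc
  rw [← hpeq] at hs2
  simp [hp1def, Walk.support_cons] at hs2
  rcases hs2 with h | h
  · exact hadj.ne.symm h
  · exact hne h



lemma treeLE_iff' (hT : T.IsTree) {r x y : V} :
    treeLE T r x y ↔ x ∈ (pth hT r y).support := by
  constructor
  · intro h; exact h _ (pth_isPath hT r y)
  · intro hx p hp; rw [pth_unique hT p hp]; exact hx

end NSTAux

/-- Every level of a normal spanning tree of a connected graph `G` is a dispersed set
of vertices of `G`. -/
theorem stmt16 {V : Type u} (G T : SimpleGraph V) (r : V)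
    (hG : G.Connected) (h : IsNormalSpanningTree G T r) (n : ℕ) :
    Dispersed G {v : V | T.dist r v = n} := by
  classical
  obtain ⟨hT, hle, hnorm⟩ := h
  intro f hf
  obtain ⟨hinj, hadjf⟩ := hf
  have hcomp : ∀ {x y : V}, G.Adj x y →
      x ∈ (pth hT r y).support ∨ y ∈ (pth hT r x).support := by
    intro x y hxy
    rcases hnorm hxy with hc | hc
    · exact Or.inl ((treeLE_iff' hT).1 hc)
    · exact Or.inr ((treeLE_iff' hT).1 hc)
  have hmono : ∀ {x y : V}, x ∈ (pth hT r y).support → x ≠ y →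
      T.dist r x < T.dist r y := by
    intro x y hx hne
    rw [dist_eq_length' hT, dist_eq_length' hT]
    exact length_lt' hT hx hne
  have claim : ∀ j : ℕ, ∃ t : V, j ≤ T.dist r t ∧
      ∃ m : ℕ, ∀ k, m ≤ k → t ∈ (pth hT r (f k)).support ∧ t ≠ f k := by
    intro j
    induction j with
    | zero =>
      refine ⟨r, Nat.zero_le _, ?_⟩
      by_cases hr : ∃ k0, f k0 = r
      · obtain ⟨k0, hk0⟩ := hr
        refine ⟨k0 + 1, fun k hk => ⟨SimpleGraph.Walk.start_mem_support _, fun heq => ?_⟩⟩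
        have : k0 = k := hinj (hk0.trans heq)
        omega
      · exact ⟨0, fun k _ => ⟨SimpleGraph.Walk.start_mem_support _, fun heq => hr ⟨k, heq.symm⟩⟩⟩
    | succ j ih =>
      obtain ⟨t, hjt, m, hm⟩ := ih
      obtain ⟨ht0, hne0⟩ := hm m le_rfl
      obtain ⟨s, hadj, hts, hsv⟩ := child_exists hT ht0 hne0
      have hs_all : ∀ k, m ≤ k → s ∈ (pth hT r (f k)).support := by
        intro k hk
        induction k, hk using Nat.le_induction with
        | base => exact hsv
        | succ k hk ihk =>
          obtain ⟨htk1, hne1⟩ := hm (k + 1) (by omega)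
          rcases hcomp (hadjf k) with hcase | hcase
          · exact pthTrans hT ihk hcase
          · obtain ⟨s', hadj', hts', hs'v⟩ := child_exists hT htk1 hne1
            have hs'k : s' ∈ (pth hT r (f k)).support := pthTrans hT hs'v hcase
            rcases mem_chain' hT ihk hs'k with hcmp | hcmp
            · have heq : s = s' := child_unique_half hT hadj hts hadj' hcmp
              exact heq ▸ hs'v
            · have heq : s' = s := child_unique_half hT hadj' hts' hadj hcmp
              exact heq ▸ hs'v
      have hdists : j + 1 ≤ T.dist r s := by
        have := hmono hts hadj.ne
        omega
      by_cases hsin : ∃ k0, f k0 = s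
      · obtain ⟨k0, hk0⟩ := hsin
        refine ⟨s, hdists, max m (k0 + 1), fun k hk => ⟨hs_all k (le_of_max_le_left hk), ?_⟩⟩
        intro heq
        have : k0 = k := hinj (hk0.trans heq)
        have := le_of_max_le_right hk
        omega
      · exact ⟨s, hdists, m, fun k hk => ⟨hs_all k hk, fun heq => hsin ⟨k, heq.symm⟩⟩⟩
  obtain ⟨t, hnt, m, hm⟩ := claim n
  refine ⟨{v | v ∈ (pth hT r t).support}, (pth hT r t).support.finite_toSet, m, ?_⟩
  intro k hk u hu_mem hu hn hreach
  have key : ∀ {x y : ↑({v : V | v ∈ (pth hT r t).support}ᶜ)}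
      (w : (G.induce ({v : V | v ∈ (pth hT r t).support}ᶜ)).Walk x y),
      (t ∈ (pth hT r (x : V)).support ∧ t ≠ (x : V)) →
      t ∈ (pth hT r (y : V)).support ∧ t ≠ (y : V) := by
    intro x y w
    induction w with
    | nil => exact id
    | @cons a b c ha p ihw =>
      intro hx
      apply ihw
      have hGadj : G.Adj (a : V) (b : V) := ha
      obtain ⟨ht_x, hne_x⟩ := hx
      have hz : (b : V) ∉ (pth hT r t).support := b.property
      rcases hcomp hGadj with hcase | hcase
      · refine ⟨pthTrans hT ht_x hcase, fun heq => hz (heq ▸ SimpleGraph.Walk.end_mem_support _)⟩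
      · rcases mem_chain' hT hcase ht_x with hc | hc
        · exact absurd hc hz
        · exact ⟨hc, fun heq => hz (heq ▸ SimpleGraph.Walk.end_mem_support _)⟩
  obtain ⟨w⟩ := hreach
  obtain ⟨htu, hneu⟩ := key w.reverse (hm k hk)
  have hlt : T.dist r t < T.dist r u := hmono htu hneu
  have hun : T.dist r u = n := hu_mem
  omega
end
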